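/- arXiv:2205.05425 — 3 statements merged into one kernel-verified Lean document; each statement's English description precedes it below -/
import Mathlib

section
/- Under the ergodic grouped M-estimation setting, assume additionally that (i) for every τ ∈ 𝒢 the population criterion S(·, τ) attains a unique minimum on Θ at a point θ*(τ), and (ii) (identification of the true assignment) there is a distinguished element τ₀ ∈ 𝒢 such that S(θ, τ) > S(θ*(τ₀), τ₀) for every θ ∈ Θ and every τ ∈ 𝒢 with τ ≠ τ₀. Let θ̃ₙ : 𝒢 × Ω → Θ be measurable maps such that for every τ ∈ 𝒢 and P-almost every ω, Sₙ(θ̃ₙ(τ, ω), τ)(ω) = min_{θ∈Θ} Sₙ(θ, τ)(ω), and let τ̂ₙ : Ω → 𝒢 be measurable maps such that for P-almost every ω, Sₙ(θ̃ₙ(τ̂ₙ(ω), ω), τ̂ₙ(ω))(ω) = min_{τ∈𝒢} Sₙ(θ̃ₙ(τ, ω), τ)(ω). Then the estimated group assignment is consistent: P(τ̂ₙ ≠ τ₀) → 0 as n → ∞. -/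
open MeasureTheory Filter Topology


noncomputable section

namespace GMest

variable {Ω : Type*} [MeasurableSpace Ω] {P : Measure Ω} [IsProbabilityMeasure P] {T : Ω → Ω}

/-- The Koopman operator on `L²`. -/
def koopman (hT : MeasurePreserving T P P) : Lp ℝ 2 P →L[ℝ] Lp ℝ 2 P :=
  LinearMap.mkContinuous
    { toFun := Lp.compMeasurePreserving T hT
      map_add' := map_add _
      map_smul' := by
        intro c g
        refine Lp.ext ?_
        filter_upwards [Lp.coeFn_compMeasurePreserving (c • g) hT,
          (Lp.coeFn_smul c g).comp_tendsto hT.quasiMeasurePreserving.tendsto_ae,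
          Lp.coeFn_smul c (Lp.compMeasurePreserving T hT g),
          Lp.coeFn_compMeasurePreserving g hT] with ω h1 h2 h3 h4
        simp only [Function.comp_apply] at *
        rw [h1, RingHom.id_apply, h3]
        simp only [Pi.smul_apply, Function.comp_apply] at h2 ⊢
        rw [h2, h4] }
    1 (fun g => by simp [Lp.norm_compMeasurePreserving])

theorem koopman_coeFn (hT : MeasurePreserving T P P) (g : Lp ℝ 2 P) :
    (koopman hT g : Ω → ℝ) =ᵐ[P] fun ω => g (T ω) :=
  Lp.coeFn_compMeasurePreserving g hT

theorem norm_koopman_le (hT : MeasurePreserving T P P) : ‖koopman hT‖ ≤ 1 :=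
  LinearMap.mkContinuous_norm_le _ zero_le_one _

theorem koopman_iterate (hT : MeasurePreserving T P P) (g : Lp ℝ 2 P) (t : ℕ) :
    ((koopman hT)^[t] g : Ω → ℝ) =ᵐ[P] fun ω => g (T^[t] ω) := by
  induction t with
  | zero => simp
  | succ t ih =>
    rw [Function.iterate_succ_apply']
    calc ((koopman hT) ((koopman hT)^[t] g) : Ω → ℝ)
        =ᵐ[P] fun ω => ((koopman hT)^[t] g : Ω → ℝ) (T ω) := koopman_coeFn hT _
      _ =ᵐ[P] fun ω => g (T^[t+1] ω) := by
          filter_upwards [ih.comp_tendsto hT.quasiMeasurePreserving.tendsto_ae] with ω hω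
          simpa [Function.iterate_succ_apply, Function.comp] using hω


theorem coeFn_lp_sum {ι : Type*} (v : Finset ι) (F : ι → Lp ℝ 2 P) :
    ((∑ i ∈ v, F i : Lp ℝ 2 P) : Ω → ℝ) =ᵐ[P] fun ω => ∑ i ∈ v, (F i : Ω → ℝ) ω := by
  classical
  induction v using Finset.induction_on with
  | empty => simp only [Finset.sum_empty]; exact Lp.coeFn_zero ℝ 2 P
  | insert _ _ hx ih =>
    rename_i a s
    rw [Finset.sum_insert hx]
    calc ((F a + ∑ i ∈ s, F i : Lp ℝ 2 P) : Ω → ℝ)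
        =ᵐ[P] (F a : Ω → ℝ) + ((∑ i ∈ s, F i : Lp ℝ 2 P) : Ω → ℝ) := Lp.coeFn_add _ _
      _ =ᵐ[P] fun ω => ∑ i ∈ insert a s, (F i : Ω → ℝ) ω := by
          filter_upwards [ih] with ω hω
          rw [Finset.sum_insert hx, Pi.add_apply, hω]

theorem coeFn_birkhoffAverage (hT : MeasurePreserving T P P) (g : Lp ℝ 2 P) (n : ℕ) :
    ((birkhoffAverage ℝ (koopman hT) id n g : Lp ℝ 2 P) : Ω → ℝ) =ᵐ[P]
      fun ω => (n : ℝ)⁻¹ * ∑ t ∈ Finset.range n, g (T^[t] ω) := by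
  have hsum : ((birkhoffSum (koopman hT) id n g : Lp ℝ 2 P) : Ω → ℝ) =ᵐ[P]
      fun ω => ∑ t ∈ Finset.range n, g (T^[t] ω) := by
    have h1 := coeFn_lp_sum (Finset.range n) (fun k => (koopman hT)^[k] g)
    have h2 : ∀ k, ((koopman hT)^[k] g : Ω → ℝ) =ᵐ[P] fun ω => g (T^[k] ω) :=
      koopman_iterate hT g
    have h3 : ∀ᵐ ω ∂P, ∀ k ∈ Finset.range n,
        ((koopman hT)^[k] g : Ω → ℝ) ω = g (T^[k] ω) :=
      (ae_ball_iff (Finset.range n).countable_toSet).2 fun k _ => h2 k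
    have hbs : birkhoffSum (koopman hT) id n g = ∑ k ∈ Finset.range n, (koopman hT)^[k] g := by
      simp [birkhoffSum]
    filter_upwards [h1, h3] with ω h1ω h3ω
    rw [hbs, h1ω]
    exact Finset.sum_congr rfl fun k hk => h3ω k hk
  calc ((birkhoffAverage ℝ (koopman hT) id n g : Lp ℝ 2 P) : Ω → ℝ)
      =ᵐ[P] (n : ℝ)⁻¹ • ((birkhoffSum (koopman hT) id n g : Lp ℝ 2 P) : Ω → ℝ) :=
        Lp.coeFn_smul _ _
    _ =ᵐ[P] fun ω => (n : ℝ)⁻¹ * ∑ t ∈ Finset.range n, g (T^[t] ω) := by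
        filter_upwards [hsum] with ω hω
        simp [hω]

set_option synthInstance.maxHeartbeats 1000000 in
set_option maxHeartbeats 2000000 in
theorem birkhoff_L2_tendsto (hT : Ergodic T P) (g : Lp ℝ 2 P) :
    ∃ L : Lp ℝ 2 P, ((L : Ω → ℝ) =ᵐ[P] fun _ => ∫ ω, g ω ∂P) ∧
      Tendsto (fun n => ‖birkhoffAverage ℝ (koopman hT.toMeasurePreserving) id n g - L‖)
        atTop (𝓝 0) := by
  set U := koopman hT.toMeasurePreserving with hU
  set K := (U : Lp ℝ 2 P →L[ℝ] Lp ℝ 2 P).eqLocus (1 : Lp ℝ 2 P →L[ℝ] Lp ℝ 2 P) with hK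
  set L : Lp ℝ 2 P := ↑(Submodule.orthogonalProjectionOnto K g) with hL
  have htend : Tendsto (fun n => birkhoffAverage ℝ U id n g) atTop (𝓝 L) :=
    ContinuousLinearMap.tendsto_birkhoffAverage_orthogonalProjection U
      (norm_koopman_le hT.toMeasurePreserving) g
  have hUL : U L = L := (Submodule.orthogonalProjectionOnto K g).2
  -- L is a.e. constant
  have hLT : (L : Ω → ℝ) ∘ T =ᵐ[P] (L : Ω → ℝ) := by
    have h1 : (U L : Ω → ℝ) =ᵐ[P] fun ω => L (T ω) := koopman_coeFn _ L
    rw [hUL] at h1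
    exact h1.symm
  obtain ⟨c, hc⟩ : ∃ c, (L : Ω → ℝ) =ᵐ[P] fun _ => c :=
    hT.ae_eq_const_of_ae_eq_comp₀
      ((Lp.aestronglyMeasurable L).aemeasurable.nullMeasurable) hLT
  -- the constant is ∫ g
  have hone_mem : (MemLp.toLp (fun _ => (1:ℝ)) (memLp_const 1) : Lp ℝ 2 P) ∈ K := by
    set one : Lp ℝ 2 P := MemLp.toLp (fun _ => (1:ℝ)) (memLp_const 1) with hone
    have hcoe : (one : Ω → ℝ) =ᵐ[P] fun _ => (1:ℝ) := MemLp.coeFn_toLp _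
    have : U one = one := by
      refine Lp.ext ?_
      calc (U one : Ω → ℝ) =ᵐ[P] (one : Ω → ℝ) ∘ T := koopman_coeFn _ one
        _ =ᵐ[P] fun _ => (1:ℝ) :=
            hcoe.comp_tendsto hT.toMeasurePreserving.quasiMeasurePreserving.tendsto_ae
        _ =ᵐ[P] (one : Ω → ℝ) := hcoe.symm
    simpa [hK, LinearMap.mem_eqLocus] using this
  have horth : g - L ∈ Kᗮ := Submodule.sub_starProjection_mem_orthogonal (K := K) g
  have hinner : (inner ℝ (MemLp.toLp (fun _ => (1:ℝ)) (memLp_const 1) : Lp ℝ 2 P) (g - L) : ℝ)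
      = 0 := (Submodule.mem_orthogonal K (g - L)).1 horth _ hone_mem
  have hint : ∫ ω, ((g : Ω → ℝ) ω - (L : Ω → ℝ) ω) ∂P = 0 := by
    rw [MeasureTheory.L2.inner_def] at hinner
    rw [← hinner]
    refine integral_congr_ae ?_
    filter_upwards [MemLp.coeFn_toLp (μ := P) (memLp_const (1:ℝ)),
      Lp.coeFn_sub g L] with ω h1 h2
    rw [RCLike.inner_apply, conj_trivial, h1, mul_one, h2, Pi.sub_apply]
  have hgint : Integrable (g : Ω → ℝ) P := (Lp.memLp g).integrable one_le_two
  have hLint : Integrable (L : Ω → ℝ) P := (Lp.memLp L).integrable one_le_two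
  have hintL : ∫ ω, (L : Ω → ℝ) ω ∂P = c := by
    rw [integral_congr_ae hc]
    simp
  have hcg : c = ∫ ω, (g : Ω → ℝ) ω ∂P := by
    rw [integral_sub hgint hLint, hintL, sub_eq_zero] at hint
    exact hint.symm
  exact ⟨L, by rw [← hcg]; exact hc, (tendsto_iff_norm_sub_tendsto_zero).1 htend⟩

theorem integral_abs_comp_iterate (hT : MeasurePreserving T P P) {f : Ω → ℝ}
    (hf : Integrable f P) (t : ℕ) :
    ∫ ω, |f (T^[t] ω)| ∂P = ∫ ω, |f ω| ∂P := by
  have h := hT.iterate t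
  have hg : AEStronglyMeasurable (fun ω => |f ω|) (Measure.map (T^[t]) P) := by
    rw [h.map_eq]; exact hf.abs.aestronglyMeasurable
  calc ∫ ω, |f (T^[t] ω)| ∂P = ∫ ω, |f ω| ∂(Measure.map (T^[t]) P) :=
        (integral_map h.aemeasurable hg).symm
    _ = ∫ ω, |f ω| ∂P := by rw [h.map_eq]

theorem integrable_comp_iterate (hT : MeasurePreserving T P P) {f : Ω → ℝ}
    (hf : Integrable f P) (t : ℕ) : Integrable (fun ω => f (T^[t] ω)) P :=
  (hT.iterate t).integrable_comp hf.aestronglyMeasurable |>.2 hf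

theorem integrable_avg (hT : MeasurePreserving T P P) {f : Ω → ℝ}
    (hf : Integrable f P) (n : ℕ) :
    Integrable (fun ω => (n : ℝ)⁻¹ * ∑ t ∈ Finset.range n, f (T^[t] ω)) P :=
  (integrable_finset_sum _ (fun t _ => integrable_comp_iterate hT hf t)).const_mul _

theorem avg_L1_contraction (hT : MeasurePreserving T P P) {f : Ω → ℝ}
    (hf : Integrable f P) (n : ℕ) :
    ∫ ω, |(n : ℝ)⁻¹ * ∑ t ∈ Finset.range n, f (T^[t] ω)| ∂P ≤ ∫ ω, |f ω| ∂P := by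
  have habs : ∀ ω, |(n : ℝ)⁻¹ * ∑ t ∈ Finset.range n, f (T^[t] ω)| ≤
      (n : ℝ)⁻¹ * ∑ t ∈ Finset.range n, |f (T^[t] ω)| := by
    intro ω
    rw [abs_mul, abs_of_nonneg (by positivity : (0:ℝ) ≤ (n:ℝ)⁻¹)]
    exact mul_le_mul_of_nonneg_left (Finset.abs_sum_le_sum_abs _ _) (by positivity)
  have h1 : ∫ ω, |(n : ℝ)⁻¹ * ∑ t ∈ Finset.range n, f (T^[t] ω)| ∂P ≤
      ∫ ω, (n : ℝ)⁻¹ * ∑ t ∈ Finset.range n, |f (T^[t] ω)| ∂P := by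
    refine integral_mono (integrable_avg hT hf n).abs ?_ habs
    exact (integrable_finset_sum _ (fun t _ => (integrable_comp_iterate hT hf t).abs)).const_mul _
  refine h1.trans ?_
  rw [integral_const_mul, integral_finset_sum _ (fun t _ => (integrable_comp_iterate hT hf t).abs)]
  have : ∑ t ∈ Finset.range n, ∫ ω, |f (T^[t] ω)| ∂P = n * ∫ ω, |f ω| ∂P := by
    rw [Finset.sum_congr rfl (fun t _ => integral_abs_comp_iterate hT hf t)]
    simp [Finset.sum_const, mul_comm]
  rw [this]
  rcases Nat.eq_zero_or_pos n with h | h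
  · simp [h]
    positivity
  · rw [← mul_assoc, inv_mul_cancel₀ (by positivity : ((n:ℝ)) ≠ 0), one_mul]

set_option maxHeartbeats 1000000 in
theorem avg_L1_tendsto_of_memL2 (hT : Ergodic T P) {g : Ω → ℝ} (hg : MemLp g 2 P) :
    Tendsto (fun n : ℕ => ∫ ω, |(n : ℝ)⁻¹ * ∑ t ∈ Finset.range n, g (T^[t] ω) - ∫ x, g x ∂P| ∂P)
      atTop (𝓝 0) := by
  set gL : Lp ℝ 2 P := hg.toLp g with hgL
  obtain ⟨L, hLc, hnorm⟩ := birkhoff_L2_tendsto hT gL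
  have hint_eq : ∫ x, (gL : Ω → ℝ) x ∂P = ∫ x, g x ∂P :=
    integral_congr_ae (MemLp.coeFn_toLp hg)
  have key : ∀ n : ℕ, ∫ ω, |(n : ℝ)⁻¹ * ∑ t ∈ Finset.range n, g (T^[t] ω) - ∫ x, g x ∂P| ∂P ≤
      ‖birkhoffAverage ℝ (koopman hT.toMeasurePreserving) id n gL - L‖ := by
    intro n
    set Bn : Lp ℝ 2 P := birkhoffAverage ℝ (koopman hT.toMeasurePreserving) id n gL with hBn
    have hae : (fun ω => |(n : ℝ)⁻¹ * ∑ t ∈ Finset.range n, g (T^[t] ω) - ∫ x, g x ∂P|)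
        =ᵐ[P] fun ω => ‖(Bn - L : Lp ℝ 2 P) ω‖ := by
      have h1 : ∀ᵐ ω ∂P, ∀ t ∈ Finset.range n, g (T^[t] ω) = (gL : Ω → ℝ) (T^[t] ω) := by
        refine (ae_ball_iff (Finset.range n).countable_toSet).2 fun t _ => ?_
        exact ((MemLp.coeFn_toLp hg).symm).comp_tendsto
          (hT.toMeasurePreserving.iterate t).quasiMeasurePreserving.tendsto_ae
      filter_upwards [h1, coeFn_birkhoffAverage hT.toMeasurePreserving gL n,
        Lp.coeFn_sub Bn L, hLc] with ω h1ω h2ω h3ω h4ω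
      rw [h3ω, Pi.sub_apply, h2ω, h4ω, Real.norm_eq_abs, ← hint_eq]
      rw [Finset.sum_congr rfl fun t ht => h1ω t ht]
    rw [integral_congr_ae hae]
    have hBLint : Integrable ((Bn - L : Lp ℝ 2 P) : Ω → ℝ) P :=
      (Lp.memLp _).integrable one_le_two
    have e1 : ∫ ω, ‖(Bn - L : Lp ℝ 2 P) ω‖ ∂P
        = (eLpNorm ((Bn - L : Lp ℝ 2 P) : Ω → ℝ) 1 P).toReal := by
      rw [integral_norm_eq_lintegral_enorm (Lp.aestronglyMeasurable _),
        eLpNorm_one_eq_lintegral_enorm]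
    rw [e1, Lp.norm_def]
    refine ENNReal.toReal_mono (Lp.eLpNorm_ne_top _) ?_
    exact eLpNorm_le_eLpNorm_of_exponent_le one_le_two (Lp.aestronglyMeasurable _)
  refine tendsto_of_tendsto_of_tendsto_of_le_of_le tendsto_const_nhds hnorm
    (fun n => integral_nonneg fun ω => abs_nonneg _) key

theorem exists_L2_approx {f : Ω → ℝ} (hf : Integrable f P) {κ : ℝ} (hκ : 0 < κ) :
    ∃ g : Ω → ℝ, MemLp g 2 P ∧ Integrable g P ∧ ∫ ω, |f ω - g ω| ∂P < κ := by
  set g : ℕ → Ω → ℝ := fun m ω => max (-(m:ℝ)) (min (f ω) m) with hg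
  have hgmeas : ∀ m : ℕ, AEStronglyMeasurable (g m) P := fun m =>
    (continuous_const.max (continuous_id.min continuous_const)).comp_aestronglyMeasurable hf.1
  have hgbd : ∀ m : ℕ, ∀ ω, |g m ω| ≤ (m : ℝ) := by
    intro m ω
    rw [abs_le]
    refine ⟨neg_le_of_neg_le (neg_le_of_neg_le ?_), ?_⟩
    · exact le_max_left _ _
    · exact max_le (neg_le_self (by positivity)) (min_le_right _ _)
  have hgabs : ∀ m : ℕ, ∀ ω, |g m ω| ≤ |f ω| := by
    intro m ω
    rw [abs_le]
    constructor
    · exact le_max_of_le_right (le_min (neg_abs_le _) ((neg_nonpos.2 (abs_nonneg _)).trans (Nat.cast_nonneg m)))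
    · exact max_le ((neg_nonpos.2 (by positivity)).trans (abs_nonneg _))
        ((min_le_left _ _).trans (le_abs_self _))
  have hmem : ∀ m : ℕ, MemLp (g m) 2 P := fun m =>
    MemLp.of_bound (hgmeas m) (m : ℝ) (Eventually.of_forall fun ω => by
      rw [Real.norm_eq_abs]; exact hgbd m ω)
  have htend : Tendsto (fun m : ℕ => ∫ ω, |f ω - g m ω| ∂P) atTop (𝓝 0) := by
    have h0 : (0 : ℝ) = ∫ (_ : Ω), (0:ℝ) ∂P := by simp
    rw [h0]
    refine tendsto_integral_of_dominated_convergence (fun ω => 2 * |f ω|)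
      (fun m => ((hf.1.sub (hgmeas m)).norm).congr ?_) (hf.abs.const_mul 2)
      (fun m => Eventually.of_forall fun ω => ?_) (Eventually.of_forall fun ω => ?_)
    · exact Eventually.of_forall fun ω => by simp [Real.norm_eq_abs]
    · rw [Real.norm_eq_abs, abs_abs]
      calc |f ω - g m ω| ≤ |f ω| + |g m ω| := abs_sub _ _
        _ ≤ |f ω| + |f ω| := by linarith [hgabs m ω]
        _ = 2 * |f ω| := by ring
    · refine Tendsto.congr' ?_ tendsto_const_nhds
      filter_upwards [eventually_ge_atTop ⌈|f ω|⌉₊] with m hm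
      have hmf : |f ω| ≤ (m : ℝ) := (Nat.le_ceil _).trans (Nat.cast_le.2 hm)
      have h1 : min (f ω) m = f ω := min_eq_left ((le_abs_self _).trans hmf)
      have h2 : max (-(m:ℝ)) (f ω) = f ω :=
        max_eq_right ((neg_le_neg hmf).trans (neg_abs_le _))
      simp only [hg, h1, h2, sub_self, abs_zero]
  obtain ⟨m, hm⟩ := (htend.eventually (eventually_lt_nhds hκ)).exists
  exact ⟨g m, hmem m, (hmem m).integrable one_le_two, hm⟩

set_option maxHeartbeats 1000000 in
theorem avg_L1_tendsto (hT : Ergodic T P) {f : Ω → ℝ} (hf : Integrable f P) :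
    Tendsto (fun n : ℕ => ∫ ω, |(n : ℝ)⁻¹ * ∑ t ∈ Finset.range n, f (T^[t] ω)
        - ∫ x, f x ∂P| ∂P) atTop (𝓝 0) := by
  rw [NormedAddCommGroup.tendsto_nhds_zero]
  intro ε hε
  obtain ⟨g, hg2, hgint, hfg⟩ := exists_L2_approx hf (by positivity : (0:ℝ) < ε/4)
  set h : Ω → ℝ := fun ω => f ω - g ω with hh
  have hhint : Integrable h P := hf.sub hgint
  have hmid := avg_L1_tendsto_of_memL2 hT hg2
  have key : ∀ n : ℕ, ∫ ω, |(n : ℝ)⁻¹ * ∑ t ∈ Finset.range n, f (T^[t] ω) - ∫ x, f x ∂P| ∂P ≤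
      ε/4 + (∫ ω, |(n : ℝ)⁻¹ * ∑ t ∈ Finset.range n, g (T^[t] ω) - ∫ x, g x ∂P| ∂P) + ε/4 := by
    intro n
    have hsplit : ∀ ω, (n : ℝ)⁻¹ * ∑ t ∈ Finset.range n, f (T^[t] ω) - ∫ x, f x ∂P =
        ((n : ℝ)⁻¹ * ∑ t ∈ Finset.range n, h (T^[t] ω))
        + ((n : ℝ)⁻¹ * ∑ t ∈ Finset.range n, g (T^[t] ω) - ∫ x, g x ∂P)
        + (∫ x, g x ∂P - ∫ x, f x ∂P) := by
      intro ω
      have : ∑ t ∈ Finset.range n, f (T^[t] ω) =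
          ∑ t ∈ Finset.range n, h (T^[t] ω) + ∑ t ∈ Finset.range n, g (T^[t] ω) := by
        rw [← Finset.sum_add_distrib]
        exact Finset.sum_congr rfl fun t _ => by simp [hh]
      rw [this]; ring
    have hptwise : ∀ ω, |(n : ℝ)⁻¹ * ∑ t ∈ Finset.range n, f (T^[t] ω) - ∫ x, f x ∂P| ≤
        |(n : ℝ)⁻¹ * ∑ t ∈ Finset.range n, h (T^[t] ω)|
        + |(n : ℝ)⁻¹ * ∑ t ∈ Finset.range n, g (T^[t] ω) - ∫ x, g x ∂P|
        + |∫ x, g x ∂P - ∫ x, f x ∂P| := by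
      intro ω
      rw [hsplit ω]
      exact (abs_add_le _ _).trans (add_le_add_left (abs_add_le _ _) _)
    have int1 : Integrable (fun ω => |(n : ℝ)⁻¹ * ∑ t ∈ Finset.range n, h (T^[t] ω)|) P :=
      (integrable_avg hT.toMeasurePreserving hhint n).abs
    have int2 : Integrable
        (fun ω => |(n : ℝ)⁻¹ * ∑ t ∈ Finset.range n, g (T^[t] ω) - ∫ x, g x ∂P|) P :=
      ((integrable_avg hT.toMeasurePreserving hgint n).sub (integrable_const _)).abs
    have step1 : ∫ ω, |(n : ℝ)⁻¹ * ∑ t ∈ Finset.range n, f (T^[t] ω) - ∫ x, f x ∂P| ∂P ≤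
        (∫ ω, |(n : ℝ)⁻¹ * ∑ t ∈ Finset.range n, h (T^[t] ω)| ∂P)
        + (∫ ω, |(n : ℝ)⁻¹ * ∑ t ∈ Finset.range n, g (T^[t] ω) - ∫ x, g x ∂P| ∂P)
        + |∫ x, g x ∂P - ∫ x, f x ∂P| := by
      calc ∫ ω, |(n : ℝ)⁻¹ * ∑ t ∈ Finset.range n, f (T^[t] ω) - ∫ x, f x ∂P| ∂P
          ≤ ∫ ω, (|(n : ℝ)⁻¹ * ∑ t ∈ Finset.range n, h (T^[t] ω)|
            + |(n : ℝ)⁻¹ * ∑ t ∈ Finset.range n, g (T^[t] ω) - ∫ x, g x ∂P|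
            + |∫ x, g x ∂P - ∫ x, f x ∂P|) ∂P := by
            refine integral_mono ?_ ?_ hptwise
            · exact ((integrable_avg hT.toMeasurePreserving hf n).sub (integrable_const _)).abs
            · exact (int1.add int2).add (integrable_const _)
        _ = (∫ ω, |(n : ℝ)⁻¹ * ∑ t ∈ Finset.range n, h (T^[t] ω)| ∂P)
            + (∫ ω, |(n : ℝ)⁻¹ * ∑ t ∈ Finset.range n, g (T^[t] ω) - ∫ x, g x ∂P| ∂P)
            + |∫ x, g x ∂P - ∫ x, f x ∂P| := by
            have int12 : Integrable (fun ω => |(n : ℝ)⁻¹ * ∑ t ∈ Finset.range n, h (T^[t] ω)|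
                + |(n : ℝ)⁻¹ * ∑ t ∈ Finset.range n, g (T^[t] ω) - ∫ x, g x ∂P|) P :=
              int1.add int2
            rw [integral_add int12 (integrable_const _), integral_add int1 int2]
            simp
    have b1 : ∫ ω, |(n : ℝ)⁻¹ * ∑ t ∈ Finset.range n, h (T^[t] ω)| ∂P ≤ ε/4 :=
      (avg_L1_contraction hT.toMeasurePreserving hhint n).trans hfg.le
    have b3 : |∫ x, g x ∂P - ∫ x, f x ∂P| ≤ ε/4 := by
      rw [← integral_sub hgint hf]
      have t1 : |∫ x, (g x - f x) ∂P| ≤ ∫ x, |g x - f x| ∂P := by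
        simpa [Real.norm_eq_abs] using
          norm_integral_le_integral_norm (μ := P) (fun x => g x - f x)
      have t2 : ∫ x, |g x - f x| ∂P = ∫ x, |f x - g x| ∂P :=
        integral_congr_ae (Eventually.of_forall fun ω => abs_sub_comm (g ω) (f ω))
      rw [t2] at t1
      exact t1.trans hfg.le
    linarith [step1]
  filter_upwards [hmid.eventually (eventually_lt_nhds (by positivity : (0:ℝ) < ε/4))] with n hn
  have h1 : (0:ℝ) ≤ ∫ ω, |(n : ℝ)⁻¹ * ∑ t ∈ Finset.range n, f (T^[t] ω) - ∫ x, f x ∂P| ∂P :=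
    integral_nonneg fun ω => abs_nonneg _
  rw [Real.norm_eq_abs, abs_of_nonneg h1]
  calc ∫ ω, |(n : ℝ)⁻¹ * ∑ t ∈ Finset.range n, f (T^[t] ω) - ∫ x, f x ∂P| ∂P
      ≤ ε/4 + (∫ ω, |(n : ℝ)⁻¹ * ∑ t ∈ Finset.range n, g (T^[t] ω) - ∫ x, g x ∂P| ∂P) + ε/4 :=
        key n
    _ < ε/4 + ε/4 + ε/4 := by linarith [hn]
    _ < ε := by linarith

theorem ergodic_avg_tendstoInMeasure (hT : Ergodic T P) {f : Ω → ℝ} (hf : Integrable f P) :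
    TendstoInMeasure P (fun (n : ℕ) ω => (n : ℝ)⁻¹ * ∑ t ∈ Finset.range n, f (T^[t] ω)) atTop
      (fun _ => ∫ x, f x ∂P) := by
  rw [tendstoInMeasure_iff_dist]
  intro ε hε
  have hL1 := avg_L1_tendsto hT hf
  have hbound : ∀ n : ℕ, P {x | ε ≤ dist ((n : ℝ)⁻¹ * ∑ t ∈ Finset.range n, f (T^[t] x))
      (∫ x, f x ∂P)} ≤ ENNReal.ofReal (ε⁻¹ *
        ∫ ω, |(n : ℝ)⁻¹ * ∑ t ∈ Finset.range n, f (T^[t] ω) - ∫ x, f x ∂P| ∂P) := by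
    intro n
    set F : Ω → ℝ := fun ω => |(n : ℝ)⁻¹ * ∑ t ∈ Finset.range n, f (T^[t] ω) - ∫ x, f x ∂P|
      with hF
    have hFint : Integrable F P :=
      ((integrable_avg hT.toMeasurePreserving hf n).sub (integrable_const _)).abs
    have hmarkov := mul_meas_ge_le_integral_of_nonneg
      (Eventually.of_forall fun ω => abs_nonneg _ : 0 ≤ᵐ[P] F) hFint ε
    have hset : {x | ε ≤ dist ((n : ℝ)⁻¹ * ∑ t ∈ Finset.range n, f (T^[t] x)) (∫ x, f x ∂P)}
        = {x | ε ≤ F x} := by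
      ext x; simp [hF, Real.dist_eq]
    rw [hset]
    have hfin : P {x | ε ≤ F x} ≠ ⊤ := measure_ne_top _ _
    rw [← ENNReal.ofReal_toReal hfin]
    refine ENNReal.ofReal_le_ofReal ?_
    calc (P {x | ε ≤ F x}).toReal ≤ (∫ x, F x ∂P) / ε := (le_div_iff₀' hε).2 hmarkov
      _ = ε⁻¹ * ∫ x, F x ∂P := by rw [div_eq_inv_mul]
  refine tendsto_of_tendsto_of_tendsto_of_le_of_le tendsto_const_nhds ?_
    (fun n => zero_le) hbound
  have : Tendsto (fun n : ℕ => ε⁻¹ *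
      ∫ ω, |(n : ℝ)⁻¹ * ∑ t ∈ Finset.range n, f (T^[t] ω) - ∫ x, f x ∂P| ∂P) atTop (𝓝 0) := by
    simpa using hL1.const_mul ε⁻¹
  simpa using (ENNReal.tendsto_ofReal this)

section Wald

variable {E : Type*} [MetricSpace E]

/-- The infimum of `φ (·) ω` over a ball (intersected with a countable dense subset `D` of
`Θ`). -/
theorem wald_inf_aux (Θ : Set E) {D : Set E} (hDΘ : D ⊆ Θ) (hDc : D.Countable)
    (hDd : Θ ⊆ closure D)
    (φ : E → Ω → ℝ) (hφcont : ∀ ω, ContinuousOn (fun θ => φ θ ω) Θ)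
    (hφmeas : ∀ θ, Measurable (φ θ))
    (G : Ω → ℝ) (hGbd : ∀ θ ∈ Θ, ∀ ω, |φ θ ω| ≤ G ω)
    (θ₀ : E) (hθ₀ : θ₀ ∈ Θ) {δ : ℝ} (hδ : 0 < δ) :
    ∃ ψ : Ω → ℝ, Measurable ψ ∧ (∀ ω, |ψ ω| ≤ G ω) ∧
      (∀ ω, ∀ θ' ∈ Metric.ball θ₀ δ ∩ Θ, ψ ω ≤ φ θ' ω) ∧
      (∀ ω (b : ℝ), (∀ θ' ∈ Metric.ball θ₀ δ ∩ Θ, b ≤ φ θ' ω) → b ≤ ψ ω) := by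
  classical
  set K : Set E := Metric.ball θ₀ δ ∩ D with hK
  have hKne : K.Nonempty := by
    rcases Metric.mem_closure_iff.1 (hDd hθ₀) δ hδ with ⟨x, hxD, hxd⟩
    exact ⟨x, Metric.mem_ball'.2 hxd, hxD⟩
  have hKc : K.Countable := hDc.mono Set.inter_subset_right
  have : Countable ↥K := hKc.to_subtype
  have : Nonempty ↥K := hKne.to_subtype
  set ψ : Ω → ℝ := fun ω => ⨅ x : ↥K, φ (x : E) ω with hψ
  have hbdd : ∀ ω, BddBelow (Set.range fun x : ↥K => φ (x : E) ω) := by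
    intro ω
    refine ⟨-G ω, ?_⟩
    rintro y ⟨x, rfl⟩
    have := hGbd (x : E) (hDΘ x.2.2) ω
    linarith [abs_le.1 this]
  have hψle : ∀ ω, ∀ x : ↥K, ψ ω ≤ φ (x : E) ω := fun ω x => ciInf_le (hbdd ω) x
  refine ⟨ψ, ?_, ?_, ?_, ?_⟩
  · exact Measurable.iInf fun x => hφmeas _
  · intro ω
    rw [abs_le]
    constructor
    · exact le_ciInf fun x => by linarith [abs_le.1 (hGbd (x : E) (hDΘ x.2.2) ω)]
    · obtain ⟨x, hx⟩ := hKne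
      exact (hψle ω ⟨x, hx⟩).trans (by linarith [abs_le.1 (hGbd x (hDΘ hx.2) ω)])
  · intro ω θ' hθ'
    refine le_of_forall_pos_le_add fun η hη => ?_
    obtain ⟨r, hr, hrsub⟩ := Metric.continuousWithinAt_iff.1 (hφcont ω θ' hθ'.2) η hη
    have hθ'cl : θ' ∈ closure D := hDd hθ'.2
    obtain ⟨x, hxD, hxd⟩ := Metric.mem_closure_iff.1 hθ'cl (min r (δ - dist θ' θ₀))
      (lt_min hr (by simp [Metric.mem_ball] at hθ'; linarith [hθ'.1]))
    have hxr : dist x θ' < r := by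
      rw [dist_comm]; exact lt_of_lt_of_le hxd (min_le_left _ _)
    have hxK : x ∈ K := by
      constructor
      · have h1 : dist x θ' < δ - dist θ' θ₀ := by
          rw [dist_comm]; exact lt_of_lt_of_le hxd (min_le_right _ _)
        have := dist_triangle x θ' θ₀
        simp only [Metric.mem_ball]
        linarith
      · exact hxD
    have hclose : dist (φ x ω) (φ θ' ω) < η := hrsub (hDΘ hxD) hxr
    have := hψle ω ⟨x, hxK⟩
    rw [Real.dist_eq, abs_lt] at hclose
    linarith
  · intro ω b hb
    exact le_ciInf fun x => hb (x : E) ⟨x.2.1, hDΘ x.2.2⟩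

theorem wald_lower (Θ : Set E) (hΘcomp : IsCompact Θ) {D : Set E} (hDΘ : D ⊆ Θ)
    (hDc : D.Countable) (hDd : Θ ⊆ closure D)
    (φ : E → Ω → ℝ) (hφcont : ∀ ω, ContinuousOn (fun θ => φ θ ω) Θ)
    (hφmeas : ∀ θ, Measurable (φ θ))
    (G : Ω → ℝ) (hGint : Integrable G P) (hGbd : ∀ θ ∈ Θ, ∀ ω, |φ θ ω| ≤ G ω)
    (θ₀ : E) (hθ₀ : θ₀ ∈ Θ) {ε : ℝ} (hε : 0 < ε) :
    ∃ δ > (0:ℝ), ∃ ψ : Ω → ℝ, Integrable ψ P ∧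
      (∀ ω, ∀ θ' ∈ Metric.ball θ₀ δ ∩ Θ, ψ ω ≤ φ θ' ω) ∧
      (∫ ω, φ θ₀ ω ∂P) - ε ≤ ∫ ω, ψ ω ∂P := by
  classical
  have hex : ∀ m : ℕ, ∃ ψ : Ω → ℝ, Measurable ψ ∧ (∀ ω, |ψ ω| ≤ G ω) ∧
      (∀ ω, ∀ θ' ∈ Metric.ball θ₀ (1/(m+1)) ∩ Θ, ψ ω ≤ φ θ' ω) ∧
      (∀ ω (b : ℝ), (∀ θ' ∈ Metric.ball θ₀ (1/(m+1)) ∩ Θ, b ≤ φ θ' ω) → b ≤ ψ ω) :=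
    fun m => wald_inf_aux Θ hDΘ hDc hDd φ hφcont hφmeas G hGbd θ₀ hθ₀
      (by positivity)
  choose ψ hψmeas hψbd hψle hψge using hex
  have hψint : ∀ m, Integrable (ψ m) P := fun m =>
    hGint.mono' (hψmeas m).aestronglyMeasurable
      (Eventually.of_forall fun ω => by rw [Real.norm_eq_abs]; exact hψbd m ω)
  -- pointwise convergence of `ψ m ω` to `φ θ₀ ω`
  have hptw : ∀ ω, Tendsto (fun m => ψ m ω) atTop (𝓝 (φ θ₀ ω)) := by
    intro ω
    rw [Metric.tendsto_atTop]
    intro η hη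
    obtain ⟨r, hr, hrsub⟩ := Metric.continuousWithinAt_iff.1 (hφcont ω θ₀ hθ₀) (η/2) (by linarith)
    obtain ⟨M, hM⟩ := exists_nat_gt (1/r)
    refine ⟨M, fun m hm => ?_⟩
    have hrm : (1:ℝ)/(m+1) ≤ r := by
      rw [div_le_iff₀ (by positivity)]
      rw [div_lt_iff₀ hr] at hM
      have : (M:ℝ) ≤ (m:ℝ) := Nat.cast_le.2 hm
      nlinarith
    have hup : ψ m ω ≤ φ θ₀ ω :=
      hψle m ω θ₀ ⟨Metric.mem_ball_self (by positivity), hθ₀⟩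
    have hlow : φ θ₀ ω - η/2 ≤ ψ m ω := by
      refine hψge m ω _ fun θ' hθ' => ?_
      have hd : dist θ' θ₀ < r := lt_of_lt_of_le (Metric.mem_ball.1 hθ'.1) hrm
      have := hrsub hθ'.2 hd
      rw [Real.dist_eq, abs_lt] at this
      linarith
    rw [Real.dist_eq, abs_lt]
    constructor <;> linarith
  have htend : Tendsto (fun m => ∫ ω, ψ m ω ∂P) atTop (𝓝 (∫ ω, φ θ₀ ω ∂P)) := by
    refine tendsto_integral_of_dominated_convergence G
      (fun m => (hψmeas m).aestronglyMeasurable) hGint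
      (fun m => Eventually.of_forall fun ω => by rw [Real.norm_eq_abs]; exact hψbd m ω)
      (Eventually.of_forall hptw)
  obtain ⟨m, hm⟩ := (htend.eventually (eventually_gt_nhds
    (sub_lt_self (∫ ω, φ θ₀ ω ∂P) hε))).exists
  exact ⟨1/(m+1), by positivity, ψ m, hψint m, hψle m, hm.le⟩

end Wald

end GMest

end

/-- In the ergodic grouped M-estimation setting, under unique minimization of
the population criterion for each group assignment and identification of the true assignment
`τ0`, the estimated group assignment is consistent: `P(τ̂ₙ ≠ τ₀) → 0`. -/
theorem grouped_Mestimation_assignment_consistency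
    {Ω : Type*} [MeasurableSpace Ω] (P : Measure Ω) [IsProbabilityMeasure P]
    (T : Ω → Ω) (hT : Ergodic T P)
    {d : ℕ} (hd : 1 ≤ d)
    (Θ : Set (EuclideanSpace ℝ (Fin d))) (hΘne : Θ.Nonempty) (hΘcomp : IsCompact Θ)
    {𝒢 : Type*} [Fintype 𝒢] [Nonempty 𝒢] [MeasurableSpace 𝒢] [MeasurableSingletonClass 𝒢]
    (ρ : EuclideanSpace ℝ (Fin d) → 𝒢 → Ω → ℝ)
    (hρcont : ∀ τ ω, ContinuousOn (fun θ => ρ θ τ ω) Θ)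
    (hρmeas : ∀ θ τ, Measurable (fun ω => ρ θ τ ω))
    (hρint : ∀ τ, Integrable (fun ω => ⨆ θ : Θ, |ρ (θ : EuclideanSpace ℝ (Fin d)) τ ω|) P)
    -- the sample criterion
    (Sn : ℕ → EuclideanSpace ℝ (Fin d) → 𝒢 → Ω → ℝ)
    (hSn : ∀ n θ τ ω, Sn n θ τ ω = (n : ℝ)⁻¹ * ∑ t ∈ Finset.range n, ρ θ τ (T^[t] ω))
    -- the population criterion
    (S : EuclideanSpace ℝ (Fin d) → 𝒢 → ℝ)
    (hS : ∀ θ τ, S θ τ = ∫ ω, ρ θ τ ω ∂P)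
    -- (i) unique minimizers of the population criterion
    (θstar : 𝒢 → EuclideanSpace ℝ (Fin d))
    (hθstar_mem : ∀ τ, θstar τ ∈ Θ)
    (hθstar_min : ∀ τ, ∀ θ ∈ Θ, S (θstar τ) τ ≤ S θ τ)
    (hθstar_uniq : ∀ τ, ∀ θ ∈ Θ, θ ≠ θstar τ → S (θstar τ) τ < S θ τ)
    -- (ii) identification of the true assignment τ0
    (τ0 : 𝒢)
    (hident : ∀ θ ∈ Θ, ∀ τ : 𝒢, τ ≠ τ0 → S (θstar τ0) τ0 < S θ τ)
    -- the profile estimators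
    (θtilde : ℕ → 𝒢 → Ω → EuclideanSpace ℝ (Fin d))
    (hθtilde_meas : ∀ n τ, Measurable (fun ω => θtilde n τ ω))
    (hθtilde_min : ∀ n τ, ∀ᵐ ω ∂P, θtilde n τ ω ∈ Θ ∧
      ∀ θ ∈ Θ, Sn n (θtilde n τ ω) τ ω ≤ Sn n θ τ ω)
    -- the estimated group assignment
    (τhat : ℕ → Ω → 𝒢)
    (hτhat_meas : ∀ n, Measurable (τhat n))
    (hτhat_min : ∀ n, ∀ᵐ ω ∂P, ∀ τ : 𝒢,
      Sn n (θtilde n (τhat n ω) ω) (τhat n ω) ω ≤ Sn n (θtilde n τ ω) τ ω) :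
    Tendsto (fun n => P {ω | τhat n ω ≠ τ0}) atTop (𝓝 0) := by
  classical
  obtain ⟨D, hDΘ, hDc, hDd⟩ := hΘcomp.isSeparable.exists_countable_dense_subset
  haveI : Nonempty ↥Θ := hΘne.to_subtype
  -- dominating function bound
  have hGbd : ∀ τ : 𝒢, ∀ θ ∈ Θ, ∀ ω, |ρ θ τ ω| ≤
      ⨆ θ' : Θ, |ρ (θ' : EuclideanSpace ℝ (Fin d)) τ ω| := by
    intro τ θ hθ ω
    have hbdd : BddAbove (Set.range fun θ' : Θ =>
        |ρ (θ' : EuclideanSpace ℝ (Fin d)) τ ω|) := by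
      have himg := hΘcomp.bddAbove_image (hρcont τ ω).abs
      rwa [Set.image_eq_range] at himg
    exact le_ciSup hbdd ⟨θ, hθ⟩
  have hρint' : ∀ (τ : 𝒢), ∀ θ ∈ Θ, Integrable (fun ω => ρ θ τ ω) P := fun τ θ hθ =>
    (hρint τ).mono' (hρmeas θ τ).aestronglyMeasurable
      (Eventually.of_forall fun ω => by rw [Real.norm_eq_abs]; exact hGbd τ θ hθ ω)
  -- true criterion value
  have hc0 : S (θstar τ0) τ0 = ∫ ω, ρ (θstar τ0) τ0 ω ∂P := hS _ _
  -- convergence in measure of the sample criterion at the true parameter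
  have hY : TendstoInMeasure P
      (fun (n : ℕ) ω => (n : ℝ)⁻¹ * ∑ t ∈ Finset.range n, ρ (θstar τ0) τ0 (T^[t] ω)) atTop
      (fun _ => S (θstar τ0) τ0) := by
    rw [hc0]
    exact GMest.ergodic_avg_tendstoInMeasure hT (hρint' τ0 _ (hθstar_mem τ0))
  -- the gap
  set gap : 𝒢 → ℝ := fun τ => S (θstar τ) τ - S (θstar τ0) τ0 with hgapdef
  have hgap : ∀ τ : 𝒢, τ ≠ τ0 → 0 < gap τ := fun τ hτ =>
    sub_pos.2 (hident (θstar τ) (hθstar_mem τ) τ hτ)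
  -- Wald construction
  have hwald : ∀ (τ : 𝒢) (θ₀ : EuclideanSpace ℝ (Fin d)), ∃ δ : ℝ, 0 < δ ∧ ∃ ψ : Ω → ℝ,
      (τ ≠ τ0 → θ₀ ∈ Θ → Integrable ψ P ∧
        (∀ ω, ∀ θ' ∈ Metric.ball θ₀ δ ∩ Θ, ψ ω ≤ ρ θ' τ ω) ∧
        S (θstar τ0) τ0 + gap τ * (3/4) ≤ ∫ ω, ψ ω ∂P) := by
    intro τ θ₀
    by_cases hcase : τ ≠ τ0 ∧ θ₀ ∈ Θ
    · obtain ⟨δ, hδ, ψ, hψint, hψle, hψlb⟩ :=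
        GMest.wald_lower (P := P) Θ hΘcomp hDΘ hDc hDd (fun θ ω => ρ θ τ ω)
          (fun ω => hρcont τ ω) (fun θ => hρmeas θ τ) _ (hρint τ) (hGbd τ)
          θ₀ hcase.2 (div_pos (hgap τ hcase.1) (by norm_num) : (0:ℝ) < gap τ / 4)
      refine ⟨δ, hδ, ψ, fun _ _ => ⟨hψint, hψle, ?_⟩⟩
      have h1 : S θ₀ τ = ∫ ω, ρ θ₀ τ ω ∂P := hS _ _
      have h2 : S (θstar τ) τ ≤ S θ₀ τ := hθstar_min τ θ₀ hcase.2
      have h3 : S (θstar τ) τ = S (θstar τ0) τ0 + gap τ := by simp [hgapdef]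
      linarith
    · exact ⟨1, one_pos, 0, fun h1 h2 => absurd ⟨h1, h2⟩ hcase⟩
  choose δf hδf ψf hψf using hwald
  -- finite subcover for each τ
  have hcov : ∀ τ : 𝒢, ∃ s : Set (EuclideanSpace ℝ (Fin d)), s ⊆ Θ ∧ s.Finite ∧
      Θ ⊆ ⋃ θ₀ ∈ s, Metric.ball θ₀ (δf τ θ₀) := by
    intro τ
    obtain ⟨s, hsΘ, hsfin, hscov⟩ := hΘcomp.elim_finite_subcover_image
      (fun θ₀ _ => Metric.isOpen_ball)
      (fun θ₀ hθ₀ => Set.mem_biUnion hθ₀ (Metric.mem_ball_self (hδf τ θ₀)))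
    exact ⟨s, hsΘ, hsfin, hscov⟩
  choose sf hsΘ hsfin hscov using hcov
  -- convergence in measure for the Wald minorants
  have hX : ∀ (τ : 𝒢), τ ≠ τ0 → ∀ θ₀ ∈ sf τ, TendstoInMeasure P
      (fun (n : ℕ) ω => (n : ℝ)⁻¹ * ∑ t ∈ Finset.range n, ψf τ θ₀ (T^[t] ω)) atTop
      (fun _ => ∫ ω, ψf τ θ₀ ω ∂P) := fun τ hτ θ₀ hθ₀ =>
    GMest.ergodic_avg_tendstoInMeasure hT (hψf τ θ₀ hτ (hsΘ τ hθ₀)).1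
  -- bad events
  set F : Finset 𝒢 := Finset.univ.filter (· ≠ τ0) with hF
  set bad1 : 𝒢 → EuclideanSpace ℝ (Fin d) → ℕ → Set Ω := fun τ θ₀ n =>
    {ω | gap τ / 4 ≤ dist ((n : ℝ)⁻¹ * ∑ t ∈ Finset.range n, ψf τ θ₀ (T^[t] ω))
      (∫ ω, ψf τ θ₀ ω ∂P)} with hbad1
  set bad2 : 𝒢 → ℕ → Set Ω := fun τ n =>
    {ω | gap τ / 4 ≤ dist ((n : ℝ)⁻¹ * ∑ t ∈ Finset.range n, ρ (θstar τ0) τ0 (T^[t] ω))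
      (S (θstar τ0) τ0)} with hbad2
  -- the key a.e. inclusion
  have key : ∀ n : ℕ, ∀ᵐ ω ∂P, τhat n ω ≠ τ0 →
      ω ∈ ⋃ τ ∈ F, ⋃ θ₀ ∈ (hsfin τ).toFinset, (bad1 τ θ₀ n ∪ bad2 τ n) := by
    intro n
    filter_upwards [ae_all_iff.2 fun τ : 𝒢 => hθtilde_min n τ, hτhat_min n] with ω h1 h2 hτne
    set τ := τhat n ω with hτdef
    have hθ1 : θtilde n τ ω ∈ Θ := (h1 τ).1
    obtain ⟨θ₀, hθ₀s, hball⟩ := Set.mem_iUnion₂.1 (hscov τ hθ1)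
    obtain ⟨hψint, hψle, hψlb⟩ := hψf τ θ₀ hτne (hsΘ τ hθ₀s)
    have hgapτ := hgap τ hτne
    -- the chain of inequalities
    have hchain : (n : ℝ)⁻¹ * ∑ t ∈ Finset.range n, ψf τ θ₀ (T^[t] ω) ≤
        (n : ℝ)⁻¹ * ∑ t ∈ Finset.range n, ρ (θstar τ0) τ0 (T^[t] ω) := by
      have s1 : (n : ℝ)⁻¹ * ∑ t ∈ Finset.range n, ψf τ θ₀ (T^[t] ω) ≤
          Sn n (θtilde n τ ω) τ ω := by
        rw [hSn]
        refine mul_le_mul_of_nonneg_left ?_ (by positivity)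
        exact Finset.sum_le_sum fun t _ => hψle (T^[t] ω) (θtilde n τ ω) ⟨hball, hθ1⟩
      have s2 : Sn n (θtilde n τ ω) τ ω ≤ Sn n (θtilde n τ0 ω) τ0 ω := h2 τ0
      have s3 : Sn n (θtilde n τ0 ω) τ0 ω ≤ Sn n (θstar τ0) τ0 ω :=
        (h1 τ0).2 (θstar τ0) (hθstar_mem τ0)
      have s4 : Sn n (θstar τ0) τ0 ω =
          (n : ℝ)⁻¹ * ∑ t ∈ Finset.range n, ρ (θstar τ0) τ0 (T^[t] ω) := hSn _ _ _ _
      linarith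
    refine Set.mem_biUnion (Finset.mem_coe.2 (Finset.mem_filter.2 ⟨Finset.mem_univ τ, hτne⟩))
      (Set.mem_biUnion ((hsfin τ).mem_toFinset.2 hθ₀s) ?_)
    · by_cases hb1 : gap τ / 4 ≤ dist ((n : ℝ)⁻¹ * ∑ t ∈ Finset.range n, ψf τ θ₀ (T^[t] ω))
          (∫ ω, ψf τ θ₀ ω ∂P)
      · exact Or.inl hb1
      · refine Or.inr ?_
        push_neg at hb1
        rw [Real.dist_eq, abs_lt] at hb1
        simp only [hbad2, Set.mem_setOf_eq]
        by_contra hb2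
        push_neg at hb2
        rw [Real.dist_eq, abs_lt] at hb2
        linarith
  -- measure bound
  have hbound : ∀ n : ℕ, P {ω | τhat n ω ≠ τ0} ≤
      ∑ τ ∈ F, ∑ θ₀ ∈ (hsfin τ).toFinset, (P (bad1 τ θ₀ n) + P (bad2 τ n)) := by
    intro n
    have h1 : P {ω | τhat n ω ≠ τ0} ≤
        P (⋃ τ ∈ F, ⋃ θ₀ ∈ (hsfin τ).toFinset, (bad1 τ θ₀ n ∪ bad2 τ n)) := by
      refine measure_mono_ae ?_
      filter_upwards [key n] with ω hω hmem
      exact hω hmem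
    refine h1.trans ?_
    refine (measure_biUnion_finset_le _ _).trans ?_
    refine Finset.sum_le_sum fun τ _ => ?_
    refine (measure_biUnion_finset_le _ _).trans ?_
    exact Finset.sum_le_sum fun θ₀ _ => measure_union_le _ _
  -- each summand tends to zero
  have hsum : Tendsto (fun n => ∑ τ ∈ F, ∑ θ₀ ∈ (hsfin τ).toFinset,
      (P (bad1 τ θ₀ n) + P (bad2 τ n))) atTop (𝓝 0) := by
    have : (0 : ENNReal) = ∑ τ ∈ F, ∑ θ₀ ∈ (hsfin τ).toFinset, (0 + 0) := by simp
    rw [this]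
    refine tendsto_finset_sum _ fun τ hτ => ?_
    refine tendsto_finset_sum _ fun θ₀ hθ₀ => ?_
    have hτne : τ ≠ τ0 := by simpa [hF] using hτ
    have hgapτ := hgap τ hτne
    have t1 : Tendsto (fun n => P (bad1 τ θ₀ n)) atTop (𝓝 0) :=
      tendstoInMeasure_iff_dist.1 (hX τ hτne θ₀ ((hsfin τ).mem_toFinset.1 hθ₀)) (gap τ / 4) (by positivity)
    have t2 : Tendsto (fun n => P (bad2 τ n)) atTop (𝓝 0) :=
      tendstoInMeasure_iff_dist.1 hY (gap τ / 4) (by positivity)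
    exact t1.add t2
  exact tendsto_of_tendsto_of_tendsto_of_le_of_le tendsto_const_nhds (by simpa using hsum)
    (fun n => zero_le) hbound
end

section
/- Under the ergodic grouped M-estimation setting, assume additionally that (i) for every τ ∈ 𝒢 the population criterion S(·, τ) attains a unique minimum on Θ at a point θ*(τ), and (ii) there is a distinguished element τ₀ ∈ 𝒢 such that S(θ, τ) > S(θ*(τ₀), τ₀) for every θ ∈ Θ and every τ ∈ 𝒢 with τ ≠ τ₀. Let θ̃ₙ : 𝒢 × Ω → Θ and τ̂ₙ : Ω → 𝒢 be measurable maps such that for P-almost every ω, Sₙ(θ̃ₙ(τ, ω), τ)(ω) = min_{θ∈Θ} Sₙ(θ, τ)(ω) for every τ ∈ 𝒢 and Sₙ(θ̃ₙ(τ̂ₙ(ω), ω), τ̂ₙ(ω))(ω) = min_{τ∈𝒢} Sₙ(θ̃ₙ(τ, ω), τ)(ω). Then the estimated parameter is consistent: writing θ̂ₙ(ω) = θ̃ₙ(τ̂ₙ(ω), ω) and θ₀ = θ*(τ₀), the Euclidean distance ‖θ̂ₙ − θ₀‖ converges to 0 in P-measure as n → ∞. -/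
open MeasureTheory Filter Topology Metric
open scoped ENNReal

section ErgodicAux

variable {Ω : Type*} [MeasurableSpace Ω] {P : Measure Ω} [IsProbabilityMeasure P] {T : Ω → Ω}

set_option linter.unusedSectionVars false

lemma my_integral_comp_iter (hT : MeasurePreserving T P P) {f : Ω → ℝ}
    (hf : AEStronglyMeasurable f P) (t : ℕ) :
    ∫ ω, f (T^[t] ω) ∂P = ∫ ω, f ω ∂P := by
  have h : MeasurePreserving (T^[t]) P P := hT.iterate t
  have h2 : AEStronglyMeasurable f (Measure.map (T^[t]) P) := by rwa [h.map_eq]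
  rw [← integral_map h.aemeasurable h2, h.map_eq]

lemma my_integrable_comp_iter (hT : MeasurePreserving T P P) {f : Ω → ℝ}
    (hf : Integrable f P) (t : ℕ) :
    Integrable (fun ω => f (T^[t] ω)) P :=
  memLp_one_iff_integrable.1
    ((memLp_one_iff_integrable.2 hf).comp_measurePreserving (hT.iterate t))

lemma my_markov_avg (hT : MeasurePreserving T P P) {f : Ω → ℝ} (hf : Integrable f P)
    {δ : ℝ} (hδ : 0 < δ) (n : ℕ) :
    P {ω | δ ≤ |(n : ℝ)⁻¹ * ∑ t ∈ Finset.range n, f (T^[t] ω)|} ≤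
      ENNReal.ofReal (δ⁻¹ * ∫ ω, |f ω| ∂P) := by
  set h : Ω → ℝ := fun ω => (n : ℝ)⁻¹ * ∑ t ∈ Finset.range n, |f (T^[t] ω)| with hh
  have hint : ∀ t : ℕ, Integrable (fun ω => |f (T^[t] ω)|) P :=
    fun t => (my_integrable_comp_iter hT hf t).abs
  have hh_int : Integrable h P := by
    exact (integrable_finset_sum (Finset.range n) (fun t _ => hint t)).const_mul _
  have hh_nonneg : 0 ≤ᵐ[P] h := by
    refine Eventually.of_forall (fun ω => ?_)
    exact mul_nonneg (by positivity) (Finset.sum_nonneg fun t _ => abs_nonneg _)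
  have habs : ∀ ω, |(n : ℝ)⁻¹ * ∑ t ∈ Finset.range n, f (T^[t] ω)| ≤ h ω := by
    intro ω
    rw [abs_mul, abs_of_nonneg (by positivity : (0:ℝ) ≤ (n:ℝ)⁻¹)]
    exact mul_le_mul_of_nonneg_left (Finset.abs_sum_le_sum_abs _ _) (by positivity)
  have hsub : {ω | δ ≤ |(n : ℝ)⁻¹ * ∑ t ∈ Finset.range n, f (T^[t] ω)|} ⊆ {ω | δ ≤ h ω} :=
    fun ω hω => le_trans hω (habs ω)
  have hmark := mul_meas_ge_le_integral_of_nonneg hh_nonneg hh_int δ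
  have hinth : ∫ ω, h ω ∂P ≤ ∫ ω, |f ω| ∂P := by
    have : ∫ ω, h ω ∂P = (n : ℝ)⁻¹ * ∑ t ∈ Finset.range n, ∫ ω, |f (T^[t] ω)| ∂P := by
      rw [hh, integral_const_mul, integral_finset_sum _ (fun t _ => hint t)]
    rw [this]
    have heach : ∀ t ∈ Finset.range n, ∫ ω, |f (T^[t] ω)| ∂P = ∫ ω, |f ω| ∂P := fun t _ =>
      my_integral_comp_iter hT hf.abs.1 t
    rw [Finset.sum_congr rfl heach, Finset.sum_const, Finset.card_range, nsmul_eq_mul,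
      ← mul_assoc]
    rcases Nat.eq_zero_or_pos n with hn | hn
    · simp [hn]
      exact integral_nonneg fun ω => abs_nonneg _
    · rw [inv_mul_cancel₀ (by exact_mod_cast hn.ne' : (n:ℝ) ≠ 0), one_mul]
  have hmeas_ne : P {ω | δ ≤ h ω} ≠ ⊤ := measure_ne_top _ _
  calc P {ω | δ ≤ |(n : ℝ)⁻¹ * ∑ t ∈ Finset.range n, f (T^[t] ω)|}
      ≤ P {ω | δ ≤ h ω} := measure_mono hsub
    _ = ENNReal.ofReal (P {ω | δ ≤ h ω}).toReal := (ENNReal.ofReal_toReal hmeas_ne).symm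
    _ ≤ ENNReal.ofReal (δ⁻¹ * ∫ ω, |f ω| ∂P) := by
        apply ENNReal.ofReal_le_ofReal
        have h1 : (P {ω | δ ≤ h ω}).toReal ≤ δ⁻¹ * ∫ ω, h ω ∂P := by
          rw [le_inv_mul_iff₀ hδ]; exact hmark
        exact h1.trans (mul_le_mul_of_nonneg_left hinth (by positivity))


set_option maxHeartbeats 1000000 in
set_option synthInstance.maxHeartbeats 400000 in
lemma my_meanErgodic_L2 (hT : Ergodic T P) {f : Ω → ℝ} (hf : MemLp f 2 P) :
    TendstoInMeasure P (fun (n : ℕ) ω => (n : ℝ)⁻¹ * ∑ t ∈ Finset.range n, f (T^[t] ω)) atTop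
      (fun _ => ∫ ω, f ω ∂P) := by
  haveI : Fact ((1 : ℝ≥0∞) ≤ 2) := ⟨one_le_two⟩
  set U : Lp ℝ 2 P →L[ℝ] Lp ℝ 2 P :=
    (Lp.compMeasurePreservingₗᵢ ℝ T hT.toMeasurePreserving).toContinuousLinearMap with hU
  have hUnorm : ‖U‖ ≤ 1 := LinearIsometry.norm_toContinuousLinearMap_le _
  set x : Lp ℝ 2 P := hf.toLp f with hx
  have hUcoe : ∀ g : Lp ℝ 2 P, ⇑(U g) =ᵐ[P] ⇑g ∘ T := fun g =>
    Lp.coeFn_compMeasurePreserving g hT.toMeasurePreserving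
  -- iterates
  have hiter : ∀ t : ℕ, (⇑((⇑U)^[t] x) : Ω → ℝ) =ᵐ[P] fun ω => f (T^[t] ω) := by
    intro t
    induction t with
    | zero => simpa using hf.coeFn_toLp
    | succ t ih =>
      rw [Function.iterate_succ_apply']
      refine (hUcoe _).trans ?_
      have h1 : (⇑((⇑U)^[t] x) ∘ T) =ᵐ[P] (fun ω => f (T^[t] ω)) ∘ T := by
        refine MeasureTheory.ae_eq_comp hT.toMeasurePreserving.measurable.aemeasurable ?_
        rwa [hT.toMeasurePreserving.map_eq]
      refine h1.trans (Eventually.of_forall fun ω => ?_)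
      simp [Function.comp, Function.iterate_succ_apply]
  -- coeFn of a finset sum in Lp
  have hsum : ∀ (s : Finset ℕ) (g : ℕ → Lp ℝ 2 P),
      ⇑(∑ i ∈ s, g i) =ᵐ[P] fun ω => ∑ i ∈ s, g i ω := by
    intro s g
    induction s using Finset.induction_on with
    | empty => simp only [Finset.sum_empty]; exact Lp.coeFn_zero ℝ 2 P
    | insert a s' hnotmem ih =>
      rw [Finset.sum_insert hnotmem]
      refine (Lp.coeFn_add _ _).trans ?_
      filter_upwards [ih] with ω hω
      rw [Pi.add_apply, hω, Finset.sum_insert hnotmem]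
  -- coeFn of the Birkhoff average
  have havg : ∀ n : ℕ, ⇑(birkhoffAverage ℝ (⇑U) _root_.id n x) =ᵐ[P]
      fun ω => (n : ℝ)⁻¹ * ∑ t ∈ Finset.range n, f (T^[t] ω) := by
    intro n
    have h1 : birkhoffAverage ℝ (⇑U) _root_.id n x
        = (n : ℝ)⁻¹ • ∑ t ∈ Finset.range n, (⇑U)^[t] x := by
      simp [birkhoffAverage, birkhoffSum]
    rw [h1]
    have hall : ∀ᵐ ω ∂P, ∀ t : ℕ, ((⇑U)^[t] x) ω = f (T^[t] ω) := ae_all_iff.2 hiter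
    filter_upwards [Lp.coeFn_smul ((n : ℝ)⁻¹) (∑ t ∈ Finset.range n, (⇑U)^[t] x),
      hsum (Finset.range n) (fun t => (⇑U)^[t] x), hall] with ω h2 h3 h4
    rw [h2]
    simp only [Pi.smul_apply, smul_eq_mul, h3]
    congr 1
    exact Finset.sum_congr rfl fun t _ => h4 t
  -- von Neumann mean ergodic theorem
  have hVN := ContinuousLinearMap.tendsto_birkhoffAverage_orthogonalProjection (𝕜 := ℝ)
    U hUnorm x
  obtain ⟨L, hLfix, hVN⟩ : ∃ L : Lp ℝ 2 P, U L = L ∧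
      Tendsto (fun n => birkhoffAverage ℝ (⇑U) _root_.id n x) atTop (𝓝 L) := by
    refine ⟨_, ?_, hVN⟩
    exact LinearMap.mem_eqLocus.mp (Submodule.coe_mem _)
  have hLinv : ⇑L ∘ T =ᵐ[P] ⇑L := by
    refine (hUcoe L).symm.trans ?_
    rw [hLfix]
  have hconst : ∃ c : ℝ, ⇑L =ᵐ[P] Function.const Ω c :=
    hT.quasiErgodic.ae_eq_const_of_ae_eq_comp₀
      ((Lp.aestronglyMeasurable L).aemeasurable.nullMeasurable) hLinv
  -- the inner product with the constant function 1 computes the integral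
  set one : Lp ℝ 2 P := (memLp_const (1 : ℝ)).toLp (fun _ => (1 : ℝ)) with hone
  have hIone : ∀ g : Lp ℝ 2 P, (inner ℝ one g : ℝ) = ∫ ω, g ω ∂P := by
    intro g
    rw [MeasureTheory.L2.inner_def]
    refine integral_congr_ae ?_
    filter_upwards [MemLp.coeFn_toLp (memLp_const (1 : ℝ))] with ω hω
    rw [hω]
    simp [RCLike.inner_apply]
  have hIU : ∀ g : Lp ℝ 2 P, (inner ℝ one (U g) : ℝ) = inner ℝ one g := by
    intro g
    rw [hIone, hIone]
    rw [integral_congr_ae (hUcoe g)]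
    have := my_integral_comp_iter hT.toMeasurePreserving (Lp.aestronglyMeasurable g) 1
    simpa using this
  have hIiter : ∀ t : ℕ, (inner ℝ one ((⇑U)^[t] x) : ℝ) = inner ℝ one x := by
    intro t
    induction t with
    | zero => simp
    | succ t ih => rw [Function.iterate_succ_apply', hIU, ih]
  have hIavg : ∀ n : ℕ, 1 ≤ n →
      (inner ℝ one (birkhoffAverage ℝ (⇑U) _root_.id n x) : ℝ) = inner ℝ one x := by
    intro n hn
    have h1 : birkhoffAverage ℝ (⇑U) _root_.id n x
        = (n : ℝ)⁻¹ • ∑ t ∈ Finset.range n, (⇑U)^[t] x := by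
      simp [birkhoffAverage, birkhoffSum]
    rw [h1, real_inner_smul_right, inner_sum]
    rw [Finset.sum_congr rfl fun t _ => hIiter t, Finset.sum_const, Finset.card_range,
      nsmul_eq_mul, ← mul_assoc, inv_mul_cancel₀ (Nat.cast_ne_zero.2 (by omega) : (n : ℝ) ≠ 0), one_mul]
  have hlimI : Tendsto (fun n => (inner ℝ one (birkhoffAverage ℝ (⇑U) _root_.id n x) : ℝ))
      atTop (𝓝 (inner ℝ one L)) := (Tendsto.inner tendsto_const_nhds hVN)
  have heqI : (inner ℝ one L : ℝ) = inner ℝ one x := by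
    refine tendsto_nhds_unique hlimI ?_
    refine Tendsto.congr' ?_ tendsto_const_nhds
    filter_upwards [eventually_ge_atTop 1] with n hn
    exact (hIavg n hn).symm
  obtain ⟨c, hc⟩ := hconst
  have hcval : c = ∫ ω, f ω ∂P := by
    have h1 : (inner ℝ one L : ℝ) = c := by
      rw [hIone, integral_congr_ae hc]
      simp
    have h2 : (inner ℝ one x : ℝ) = ∫ ω, f ω ∂P := by
      rw [hIone]
      exact integral_congr_ae hf.coeFn_toLp
    rw [← h1, heqI, h2]
  have hLconst : ⇑L =ᵐ[P] fun _ => ∫ ω, f ω ∂P := by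
    rw [← hcval]; exact hc
  -- conclude: convergence in L² implies convergence in measure
  refine tendstoInMeasure_of_tendsto_eLpNorm (p := 2) two_ne_zero
    (fun n => (Lp.aestronglyMeasurable _).congr (havg n)) aestronglyMeasurable_const ?_
  have key : ∀ n : ℕ, eLpNorm ((fun ω => (n : ℝ)⁻¹ * ∑ t ∈ Finset.range n, f (T^[t] ω))
      - fun _ => ∫ ω, f ω ∂P) 2 P = ENNReal.ofReal ‖birkhoffAverage ℝ (⇑U) _root_.id n x - L‖ := by
    intro n
    have h1 : ((fun ω => (n : ℝ)⁻¹ * ∑ t ∈ Finset.range n, f (T^[t] ω))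
        - fun _ => ∫ ω, f ω ∂P) =ᵐ[P] ⇑(birkhoffAverage ℝ (⇑U) _root_.id n x - L) := by
      filter_upwards [havg n, hLconst, Lp.coeFn_sub (birkhoffAverage ℝ (⇑U) _root_.id n x) L]
        with ω ha hb hs
      simp only [Pi.sub_apply]
      rw [hs, Pi.sub_apply, ha, hb]
    rw [eLpNorm_congr_ae h1, Lp.norm_def,
      ENNReal.ofReal_toReal (Lp.eLpNorm_ne_top _)]
  simp only [key]
  have hnorm : Tendsto (fun n => ‖birkhoffAverage ℝ (⇑U) _root_.id n x - L‖) atTop (𝓝 0) := by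
    rw [← tendsto_iff_norm_sub_tendsto_zero] at *
    exact hVN
  have := (ENNReal.continuous_ofReal.tendsto 0).comp hnorm
  simpa [Function.comp_def, ofReal_norm_eq_enorm] using this


lemma my_meanErgodic_L1 (hT : Ergodic T P) {f : Ω → ℝ} (hf : Integrable f P) :
    TendstoInMeasure P (fun (n : ℕ) ω => (n : ℝ)⁻¹ * ∑ t ∈ Finset.range n, f (T^[t] ω)) atTop
      (fun _ => ∫ ω, f ω ∂P) := by
  -- replace `f` by a strongly measurable representative
  obtain ⟨g, hgsm, hfg⟩ : ∃ g, StronglyMeasurable g ∧ f =ᵐ[P] g :=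
    ⟨hf.1.mk f, hf.1.stronglyMeasurable_mk, hf.1.ae_eq_mk⟩
  have hg : Integrable g P := hf.congr hfg
  have hcomp : ∀ t : ℕ, (fun ω => g (T^[t] ω)) =ᵐ[P] fun ω => f (T^[t] ω) := by
    intro t
    refine MeasureTheory.ae_eq_comp (hT.toMeasurePreserving.iterate t).aemeasurable ?_
    rw [(hT.toMeasurePreserving.iterate t).map_eq]
    exact hfg.symm
  have hicongr : ∫ ω, g ω ∂P = ∫ ω, f ω ∂P := integral_congr_ae hfg.symm
  suffices h : TendstoInMeasure P
      (fun (n : ℕ) ω => (n : ℝ)⁻¹ * ∑ t ∈ Finset.range n, g (T^[t] ω)) atTop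
      (fun _ => ∫ ω, g ω ∂P) by
    refine h.congr (fun n => ?_) (Eventually.of_forall fun ω => hicongr)
    have hall : ∀ᵐ ω ∂P, ∀ t : ℕ, g (T^[t] ω) = f (T^[t] ω) := ae_all_iff.2 hcomp
    filter_upwards [hall] with ω hω
    rw [Finset.sum_congr rfl fun t _ => hω t]
  clear hcomp hicongr hfg hf

  -- truncations
  set gM : ℕ → Ω → ℝ := fun M ω => max (-(M : ℝ)) (min (g ω) (M : ℝ)) with hgM
  have h1 : ∀ M : ℕ, StronglyMeasurable (gM M) := fun M =>
    (measurable_const.max (hgsm.measurable.min measurable_const)).stronglyMeasurable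
  have h2 : ∀ (M : ℕ) ω, |gM M ω| ≤ (M : ℝ) := by
    intro M ω
    rw [abs_le]
    constructor
    · exact le_trans (neg_le_neg (le_refl _)) (le_max_left _ _)
    · refine max_le ?_ (le_trans (min_le_right _ _) le_rfl)
      exact le_trans (neg_nonpos.2 (Nat.cast_nonneg M)) (Nat.cast_nonneg M)
  have h3 : ∀ (M : ℕ) ω, |gM M ω| ≤ |g ω| := by
    intro M ω
    rw [abs_le]
    constructor
    · rcases le_total ((M : ℝ)) |g ω| with hc | hc
      · exact le_trans (neg_le_neg hc) (le_max_left _ _)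
      · refine le_trans ?_ (le_max_right _ _)
        exact le_min (neg_abs_le _) (le_trans (neg_nonpos.2 (abs_nonneg _)) ((abs_nonneg _).trans hc))
    · refine max_le (le_trans (neg_nonpos.2 (Nat.cast_nonneg M)) (abs_nonneg _)) ?_
      exact le_trans (min_le_left _ _) (le_abs_self _)
  have hgMint : ∀ M : ℕ, Integrable (gM M) P := by
    intro M
    refine hg.abs.mono' (h1 M).aestronglyMeasurable ?_
    exact Eventually.of_forall fun ω => by simpa [Real.norm_eq_abs] using h3 M ω
  have h4 : Tendsto (fun M : ℕ => ∫ ω, |g ω - gM M ω| ∂P) atTop (𝓝 0) := by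
    have h0 : (0 : ℝ) = ∫ (_ : Ω), (0 : ℝ) ∂P := by simp
    rw [h0]
    refine tendsto_integral_of_dominated_convergence (fun ω => 2 * |g ω|)
      (fun M => ((hgsm.measurable.sub (h1 M).measurable).abs).aestronglyMeasurable)
      (hg.abs.const_mul 2) ?_ ?_
    · intro M
      refine Eventually.of_forall fun ω => ?_
      rw [Real.norm_eq_abs, abs_abs]
      calc |g ω - gM M ω| ≤ |g ω| + |gM M ω| := abs_sub _ _
        _ ≤ |g ω| + |g ω| := by linarith [h3 M ω]
        _ = 2 * |g ω| := by ring
    · refine Eventually.of_forall fun ω => ?_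
      refine tendsto_atTop_of_eventually_const (i₀ := Nat.ceil |g ω|) fun M hM => ?_
      have hMω : |g ω| ≤ (M : ℝ) := le_trans (Nat.le_ceil _) (by exact_mod_cast hM)
      have hmin : min (g ω) (M : ℝ) = g ω := min_eq_left ((le_abs_self _).trans hMω)
      have hmax : max (-(M : ℝ)) (g ω) = g ω :=
        max_eq_right (le_trans (neg_le_neg hMω) (neg_abs_le _))
      simp [hgM, hmin, hmax]
  -- the main ε-argument
  refine tendstoInMeasure_iff_dist.2 fun δ hδ => ?_
  refine ENNReal.tendsto_nhds_zero.mpr fun ε hε => ?_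
  obtain ⟨r, hr0, hrε⟩ : ∃ r : ℝ, 0 < r ∧ ENNReal.ofReal r ≤ ε := by
    rcases eq_or_ne ε ⊤ with htop | hne
    · exact ⟨1, one_pos, by simp [htop]⟩
    · refine ⟨(min ε 1).toReal, ENNReal.toReal_pos ?_ ?_, ?_⟩
      · exact (lt_min hε zero_lt_one).ne'
      · exact ne_top_of_le_ne_top (by simp) (min_le_right _ _)
      · rw [ENNReal.ofReal_toReal (ne_top_of_le_ne_top (by simp) (min_le_right _ _))]
        exact min_le_left _ _
  -- choose a truncation level
  have hb : (0 : ℝ) < min (δ / 3) (r / 2 * (δ / 3)) := by positivity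
  obtain ⟨M, hM⟩ : ∃ M : ℕ, ∫ ω, |g ω - gM M ω| ∂P < min (δ / 3) (r / 2 * (δ / 3)) := by
    have := h4.eventually (eventually_lt_nhds hb)
    exact this.exists
  set γ := ∫ ω, |g ω - gM M ω| ∂P with hγ
  have hγ0 : 0 ≤ γ := integral_nonneg fun ω => abs_nonneg _
  have hγ1 : γ < δ / 3 := lt_of_lt_of_le hM (min_le_left _ _)
  have hγ2 : γ ≤ r / 2 * (δ / 3) := le_of_lt (lt_of_lt_of_le hM (min_le_right _ _))
  -- the truncated function is in L²
  have hgM2 : MemLp (gM M) 2 P :=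
    MemLp.of_bound (h1 M).aestronglyMeasurable (M : ℝ)
      (Eventually.of_forall fun ω => by simpa [Real.norm_eq_abs] using h2 M ω)
  have hL2 := tendstoInMeasure_iff_dist.1 (my_meanErgodic_L2 hT hgM2) (δ / 3) (by positivity)
  -- |∫ gM - ∫ g| ≤ γ
  have hconst : |(∫ ω, gM M ω ∂P) - ∫ ω, g ω ∂P| ≤ γ := by
    rw [← integral_sub (hgMint M) hg]
    calc |∫ ω, (gM M ω - g ω) ∂P| ≤ ∫ ω, |gM M ω - g ω| ∂P := by
          simpa [Real.norm_eq_abs] using norm_integral_le_integral_norm fun ω => gM M ω - g ω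
      _ = γ := by rw [hγ]; exact integral_congr_ae (Eventually.of_forall fun ω => abs_sub_comm _ _)
  -- pointwise inclusion of the bad event
  have hincl : ∀ n : ℕ, {ω | δ ≤ dist ((n : ℝ)⁻¹ * ∑ t ∈ Finset.range n, g (T^[t] ω))
        (∫ ω, g ω ∂P)} ⊆
      {ω | δ / 3 ≤ |(n : ℝ)⁻¹ * ∑ t ∈ Finset.range n, (g - gM M) (T^[t] ω)|} ∪
      {ω | δ / 3 ≤ dist ((n : ℝ)⁻¹ * ∑ t ∈ Finset.range n, gM M (T^[t] ω)) (∫ ω, gM M ω ∂P)} := by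
    intro n ω hω
    simp only [Set.mem_union, Set.mem_setOf_eq, Real.dist_eq] at hω ⊢
    by_contra hcon
    push_neg at hcon
    obtain ⟨hc1, hc2⟩ := hcon
    have hsplit : (n : ℝ)⁻¹ * ∑ t ∈ Finset.range n, g (T^[t] ω) - ∫ ω, g ω ∂P =
        ((n : ℝ)⁻¹ * ∑ t ∈ Finset.range n, (g - gM M) (T^[t] ω)) +
        ((n : ℝ)⁻¹ * ∑ t ∈ Finset.range n, gM M (T^[t] ω) - ∫ ω, gM M ω ∂P) +
        ((∫ ω, gM M ω ∂P) - ∫ ω, g ω ∂P) := by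
      simp only [Pi.sub_apply]
      rw [Finset.sum_sub_distrib, mul_sub]
      ring
    have := abs_add_three ((n : ℝ)⁻¹ * ∑ t ∈ Finset.range n, (g - gM M) (T^[t] ω))
      ((n : ℝ)⁻¹ * ∑ t ∈ Finset.range n, gM M (T^[t] ω) - ∫ ω, gM M ω ∂P)
      ((∫ ω, gM M ω ∂P) - ∫ ω, g ω ∂P)
    rw [← hsplit] at this
    have hlt : |(n : ℝ)⁻¹ * ∑ t ∈ Finset.range n, g (T^[t] ω) - ∫ ω, g ω ∂P| < δ := by
      calc |(n : ℝ)⁻¹ * ∑ t ∈ Finset.range n, g (T^[t] ω) - ∫ ω, g ω ∂P| ≤ _ := this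
        _ < δ / 3 + δ / 3 + δ / 3 := by
            linarith [hconst, hγ1, hc1, hc2]
        _ = δ := by ring
    exact absurd hω (not_le.2 hlt)
  -- conclude
  have hev2 : ∀ᶠ (n : ℕ) in atTop, P {ω | δ / 3 ≤ dist
      ((n : ℝ)⁻¹ * ∑ t ∈ Finset.range n, gM M (T^[t] ω)) (∫ ω, gM M ω ∂P)} <
      ENNReal.ofReal (r / 2) :=
    hL2.eventually_lt_const (ENNReal.ofReal_pos.2 (by positivity))
  filter_upwards [hev2] with n hn
  have hmar := my_markov_avg hT.toMeasurePreserving (hg.sub (hgMint M))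
    (show (0:ℝ) < δ / 3 by positivity) n
  have hmar2 : P {ω | δ / 3 ≤ |(n : ℝ)⁻¹ * ∑ t ∈ Finset.range n, (g - gM M) (T^[t] ω)|} ≤
      ENNReal.ofReal (r / 2) := by
    refine hmar.trans (ENNReal.ofReal_le_ofReal ?_)
    have : ∫ ω, |(g - gM M) ω| ∂P = γ := by
      rw [hγ]; rfl
    rw [this]
    calc (δ / 3)⁻¹ * γ ≤ (δ / 3)⁻¹ * (r / 2 * (δ / 3)) := by
          exact mul_le_mul_of_nonneg_left hγ2 (by positivity)
      _ = r / 2 := by field_simp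
  calc P {ω | δ ≤ dist ((n : ℝ)⁻¹ * ∑ t ∈ Finset.range n, g (T^[t] ω)) (∫ ω, g ω ∂P)}
      ≤ P ({ω | δ / 3 ≤ |(n : ℝ)⁻¹ * ∑ t ∈ Finset.range n, (g - gM M) (T^[t] ω)|} ∪
        {ω | δ / 3 ≤ dist ((n : ℝ)⁻¹ * ∑ t ∈ Finset.range n, gM M (T^[t] ω))
          (∫ ω, gM M ω ∂P)}) := measure_mono (hincl n)
    _ ≤ _ + _ := measure_union_le _ _
    _ ≤ ENNReal.ofReal (r / 2) + ENNReal.ofReal (r / 2) := add_le_add hmar2 hn.le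
    _ = ENNReal.ofReal r := by
        rw [← ENNReal.ofReal_add (by positivity) (by positivity)]
        norm_num
    _ ≤ ε := hrε


lemma my_uniform_lower {d : ℕ} (hT : Ergodic T P)
    {Θ : Set (EuclideanSpace ℝ (Fin d))} (hΘne : Θ.Nonempty) (hΘcomp : IsCompact Θ)
    (r : EuclideanSpace ℝ (Fin d) → Ω → ℝ)
    (hrcont : ∀ ω, ContinuousOn (fun θ => r θ ω) Θ)
    (hrmeas : ∀ θ, Measurable (r θ))
    (R : Ω → ℝ) (hRint : Integrable R P)
    (hRb : ∀ ω, ∀ θ ∈ Θ, |r θ ω| ≤ R ω)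
    {η : ℝ} (hη : 0 < η) :
    Tendsto (fun n : ℕ => P {ω | ∃ θ ∈ Θ,
      (n : ℝ)⁻¹ * ∑ t ∈ Finset.range n, r θ (T^[t] ω) ≤ (∫ ω, r θ ω ∂P) - η})
      atTop (𝓝 0) := by
  classical
  -- a countable dense subset of Θ
  obtain ⟨D₀, hD₀c, hD₀d⟩ := TopologicalSpace.exists_countable_dense ↥Θ
  set D : Set (EuclideanSpace ℝ (Fin d)) := Subtype.val '' D₀ with hD
  have hDc : D.Countable := hD₀c.image _
  have hDΘ : D ⊆ Θ := by rintro _ ⟨⟨θ, hθ⟩, _, rfl⟩; exact hθ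
  have hDd : Θ ⊆ closure D := by
    intro θ hθ
    have h1 : (⟨θ, hθ⟩ : ↥Θ) ∈ closure D₀ := hD₀d _
    exact (image_closure_subset_closure_image continuous_subtype_val) ⟨_, h1, rfl⟩
  -- radii
  set δk : ℕ → ℝ := fun k => 1 / (k + 1) with hδk
  have hδkpos : ∀ k, 0 < δk k := fun k => by positivity
  -- the index sets
  have hne : ∀ θ0 ∈ Θ, ∀ k : ℕ, (ball θ0 (δk k) ∩ D).Nonempty := by
    intro θ0 hθ0 k
    exact _root_.mem_closure_iff.1 (hDd hθ0) _ isOpen_ball (mem_ball_self (hδkpos k))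
  -- envelopes over countable dense index sets
  set up : EuclideanSpace ℝ (Fin d) → ℕ → Ω → ℝ :=
    fun θ0 k ω => ⨆ θ' : ↥(ball θ0 (δk k) ∩ D), r (θ' : EuclideanSpace ℝ (Fin d)) ω with hup
  set lo : EuclideanSpace ℝ (Fin d) → ℕ → Ω → ℝ :=
    fun θ0 k ω => ⨅ θ' : ↥(ball θ0 (δk k) ∩ D), r (θ' : EuclideanSpace ℝ (Fin d)) ω with hlo
  have hR0 : ∀ ω, 0 ≤ R ω := fun ω =>
    le_trans (abs_nonneg _) (hRb ω _ hΘne.choose_spec)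
  -- basic bounds
  have hbddA : ∀ (θ0 : EuclideanSpace ℝ (Fin d)) (k : ℕ) (ω : Ω),
      BddAbove (Set.range fun θ' : ↥(ball θ0 (δk k) ∩ D) =>
        r (θ' : EuclideanSpace ℝ (Fin d)) ω) := by
    intro θ0 k ω
    refine ⟨R ω, ?_⟩
    rintro x ⟨θ', rfl⟩
    exact (abs_le.1 (hRb ω _ (hDΘ θ'.2.2))).2
  have hbddB : ∀ (θ0 : EuclideanSpace ℝ (Fin d)) (k : ℕ) (ω : Ω),
      BddBelow (Set.range fun θ' : ↥(ball θ0 (δk k) ∩ D) =>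
        r (θ' : EuclideanSpace ℝ (Fin d)) ω) := by
    intro θ0 k ω
    refine ⟨-R ω, ?_⟩
    rintro x ⟨θ', rfl⟩
    exact (abs_le.1 (hRb ω _ (hDΘ θ'.2.2))).1
  have habs : ∀ θ0 ∈ Θ, ∀ (k : ℕ) (ω : Ω), |up θ0 k ω| ≤ R ω ∧ |lo θ0 k ω| ≤ R ω := by
    intro θ0 hθ0 k ω
    haveI := (hne θ0 hθ0 k).to_subtype
    haveI : Countable ↥(ball θ0 (δk k) ∩ D) := (hDc.mono Set.inter_subset_right).to_subtype
    obtain ⟨θ', hθ'⟩ := hne θ0 hθ0 k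
    constructor
    · rw [abs_le]
      constructor
      · refine le_trans ?_ (le_ciSup (hbddA θ0 k ω) ⟨θ', hθ'⟩)
        exact (abs_le.1 (hRb ω _ (hDΘ hθ'.2))).1
      · exact ciSup_le fun θ'' => (abs_le.1 (hRb ω _ (hDΘ θ''.2.2))).2
    · rw [abs_le]
      constructor
      · exact le_ciInf fun θ'' => (abs_le.1 (hRb ω _ (hDΘ θ''.2.2))).1
      · refine le_trans (ciInf_le (hbddB θ0 k ω) ⟨θ', hθ'⟩) ?_
        exact (abs_le.1 (hRb ω _ (hDΘ hθ'.2))).2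
  have hupmeas : ∀ θ0 ∈ Θ, ∀ k : ℕ, Measurable (up θ0 k) := by
    intro θ0 hθ0 k
    haveI := (hne θ0 hθ0 k).to_subtype
    haveI : Countable ↥(ball θ0 (δk k) ∩ D) := (hDc.mono Set.inter_subset_right).to_subtype
    exact Measurable.iSup fun θ' => hrmeas _
  have hlomeas : ∀ θ0 ∈ Θ, ∀ k : ℕ, Measurable (lo θ0 k) := by
    intro θ0 hθ0 k
    haveI := (hne θ0 hθ0 k).to_subtype
    haveI : Countable ↥(ball θ0 (δk k) ∩ D) := (hDc.mono Set.inter_subset_right).to_subtype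
    exact Measurable.iInf fun θ' => hrmeas _
  have hupint : ∀ θ0 ∈ Θ, ∀ k : ℕ, Integrable (up θ0 k) P := by
    intro θ0 hθ0 k
    refine hRint.mono' (hupmeas θ0 hθ0 k).aestronglyMeasurable ?_
    exact Eventually.of_forall fun ω => by
      simpa [Real.norm_eq_abs] using (habs θ0 hθ0 k ω).1
  have hloint : ∀ θ0 ∈ Θ, ∀ k : ℕ, Integrable (lo θ0 k) P := by
    intro θ0 hθ0 k
    refine hRint.mono' (hlomeas θ0 hθ0 k).aestronglyMeasurable ?_
    exact Eventually.of_forall fun ω => by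
      simpa [Real.norm_eq_abs] using (habs θ0 hθ0 k ω).2
  have hrint' : ∀ θ ∈ Θ, Integrable (r θ) P := by
    intro θ hθ
    refine hRint.mono' (hrmeas θ).aestronglyMeasurable ?_
    exact Eventually.of_forall fun ω => by simpa [Real.norm_eq_abs] using hRb ω θ hθ
  -- sandwich bounds for arbitrary points of the ball
  have hsand : ∀ θ0 ∈ Θ, ∀ (k : ℕ), ∀ θ ∈ Θ, θ ∈ ball θ0 (δk k) → ∀ ω,
      lo θ0 k ω ≤ r θ ω ∧ r θ ω ≤ up θ0 k ω := by
    intro θ0 hθ0 k θ hθ hθball ω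
    haveI := (hne θ0 hθ0 k).to_subtype
    haveI : Countable ↥(ball θ0 (δk k) ∩ D) := (hDc.mono Set.inter_subset_right).to_subtype
    have hmem : θ ∈ closure (ball θ0 (δk k) ∩ D) :=
      isOpen_ball.inter_closure ⟨hθball, hDd hθ⟩
    obtain ⟨u, hu_mem, hu_lim⟩ := mem_closure_iff_seq_limit.1 hmem
    have htend : Tendsto (fun j => r (u j) ω) atTop (𝓝 (r θ ω)) := by
      refine (hrcont ω θ hθ).tendsto.comp ?_
      exact tendsto_nhdsWithin_of_tendsto_nhds_of_eventually_within u hu_lim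
        (Eventually.of_forall fun j => hDΘ (hu_mem j).2)
    constructor
    · refine ge_of_tendsto htend (Eventually.of_forall fun j => ?_)
      exact ciInf_le (hbddB θ0 k ω) ⟨u j, hu_mem j⟩
    · refine le_of_tendsto htend (Eventually.of_forall fun j => ?_)
      exact le_ciSup (hbddA θ0 k ω) ⟨u j, hu_mem j⟩
  -- pointwise convergence of the envelopes as k → ∞
  have hconv : ∀ θ0 ∈ Θ, ∀ ω,
      Tendsto (fun k => up θ0 k ω) atTop (𝓝 (r θ0 ω)) ∧
      Tendsto (fun k => lo θ0 k ω) atTop (𝓝 (r θ0 ω)) := by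
    intro θ0 hθ0 ω
    have key : ∀ ε : ℝ, 0 < ε → ∃ N : ℕ, ∀ k ≥ N,
        |up θ0 k ω - r θ0 ω| ≤ ε / 2 ∧ |lo θ0 k ω - r θ0 ω| ≤ ε / 2 := by
      intro ε hε
      obtain ⟨δ0, hδ0, hδ0p⟩ := Metric.continuousWithinAt_iff.1 (hrcont ω θ0 hθ0) (ε / 2)
        (by positivity)
      refine ⟨Nat.ceil (1 / δ0), fun k hk => ?_⟩
      haveI := (hne θ0 hθ0 k).to_subtype
      haveI : Countable ↥(ball θ0 (δk k) ∩ D) := (hDc.mono Set.inter_subset_right).to_subtype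
      have hδsmall : δk k ≤ δ0 := by
        rw [hδk]
        simp only
        rw [div_le_iff₀ (by positivity)]
        have h1 : 1 / δ0 ≤ (k : ℝ) := le_trans (Nat.le_ceil _) (by exact_mod_cast hk)
        rw [div_le_iff₀ hδ0] at h1
        nlinarith
      have hclose : ∀ θ' : ↥(ball θ0 (δk k) ∩ D), |r (θ' : EuclideanSpace ℝ (Fin d)) ω
          - r θ0 ω| ≤ ε / 2 := by
        intro θ'
        have h1 : dist (θ' : EuclideanSpace ℝ (Fin d)) θ0 < δ0 :=
          lt_of_lt_of_le (mem_ball.1 θ'.2.1) hδsmall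
        have := hδ0p (hDΘ θ'.2.2) h1
        rw [Real.dist_eq] at this
        exact this.le
      obtain ⟨θ', hθ'⟩ := hne θ0 hθ0 k
      constructor
      · rw [abs_le]
        constructor
        · have h2 := hclose ⟨θ', hθ'⟩
          rw [abs_le] at h2
          have h3 := le_ciSup (hbddA θ0 k ω) (⟨θ', hθ'⟩ : ↥(ball θ0 (δk k) ∩ D))
          linarith [h2.1]
        · have h4 : up θ0 k ω ≤ r θ0 ω + ε / 2 := by
            refine ciSup_le fun θ'' => ?_
            have := (abs_le.1 (hclose θ'')).2
            linarith
          linarith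
      · rw [abs_le]
        constructor
        · have h4 : r θ0 ω - ε / 2 ≤ lo θ0 k ω := by
            refine le_ciInf fun θ'' => ?_
            have := (abs_le.1 (hclose θ'')).1
            linarith
          linarith
        · have h2 := hclose ⟨θ', hθ'⟩
          rw [abs_le] at h2
          have h3 := ciInf_le (hbddB θ0 k ω) (⟨θ', hθ'⟩ : ↥(ball θ0 (δk k) ∩ D))
          linarith [h2.2]
    constructor <;>
    · rw [Metric.tendsto_atTop]
      intro ε hε
      obtain ⟨N, hN⟩ := key ε hε
      exact ⟨N, fun k hk => by
        rw [Real.dist_eq]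
        have := hN k hk
        first
          | exact lt_of_le_of_lt this.1 (by linarith)
          | exact lt_of_le_of_lt this.2 (by linarith)⟩
  -- choose for each center a radius index with small integral gap
  have hgap : ∀ θ0 : ↥Θ, ∃ k : ℕ,
      (∫ ω, up (θ0 : EuclideanSpace ℝ (Fin d)) k ω ∂P)
        - (∫ ω, lo (θ0 : EuclideanSpace ℝ (Fin d)) k ω ∂P) < η / 2 := by
    rintro ⟨θ0, hθ0⟩
    have hup_t : Tendsto (fun k => ∫ ω, up θ0 k ω ∂P) atTop (𝓝 (∫ ω, r θ0 ω ∂P)) := by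
      refine tendsto_integral_of_dominated_convergence R
        (fun k => (hupmeas θ0 hθ0 k).aestronglyMeasurable) hRint
        (fun k => Eventually.of_forall fun ω => by
          simpa [Real.norm_eq_abs] using (habs θ0 hθ0 k ω).1)
        (Eventually.of_forall fun ω => (hconv θ0 hθ0 ω).1)
    have hlo_t : Tendsto (fun k => ∫ ω, lo θ0 k ω ∂P) atTop (𝓝 (∫ ω, r θ0 ω ∂P)) := by
      refine tendsto_integral_of_dominated_convergence R
        (fun k => (hlomeas θ0 hθ0 k).aestronglyMeasurable) hRint
        (fun k => Eventually.of_forall fun ω => by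
          simpa [Real.norm_eq_abs] using (habs θ0 hθ0 k ω).2)
        (Eventually.of_forall fun ω => (hconv θ0 hθ0 ω).2)
    have hdiff : Tendsto (fun k => (∫ ω, up θ0 k ω ∂P) - ∫ ω, lo θ0 k ω ∂P) atTop (𝓝 0) := by
      have := hup_t.sub hlo_t
      simpa using this
    exact (hdiff.eventually (eventually_lt_nhds (by positivity : (0:ℝ) < η / 2))).exists
  choose kk hkk using hgap
  -- finite subcover
  obtain ⟨t, ht⟩ := hΘcomp.elim_finite_subcover
    (fun θ0 : ↥Θ => ball (θ0 : EuclideanSpace ℝ (Fin d)) (δk (kk θ0)))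
    (fun θ0 => isOpen_ball)
    (by
      intro θ hθ
      exact Set.mem_iUnion.2 ⟨⟨θ, hθ⟩, mem_ball_self (hδkpos _)⟩)
  -- event inclusion
  have hkey : ∀ n : ℕ, {ω | ∃ θ ∈ Θ,
        (n : ℝ)⁻¹ * ∑ s ∈ Finset.range n, r θ (T^[s] ω) ≤ (∫ ω, r θ ω ∂P) - η} ⊆
      ⋃ i ∈ t, {ω | η / 2 ≤ dist ((n : ℝ)⁻¹ * ∑ s ∈ Finset.range n,
        lo (i : EuclideanSpace ℝ (Fin d)) (kk i) (T^[s] ω))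
        (∫ ω, lo (i : EuclideanSpace ℝ (Fin d)) (kk i) ω ∂P)} := by
    intro n ω hω
    obtain ⟨θ, hθ, hbad⟩ := hω
    obtain ⟨i, hit, hiball⟩ : ∃ i ∈ t, θ ∈ ball (i : EuclideanSpace ℝ (Fin d)) (δk (kk i)) := by
      have := ht hθ
      simpa using this
    have hi0 : (i : EuclideanSpace ℝ (Fin d)) ∈ Θ := i.2
    have hAle : (n : ℝ)⁻¹ * ∑ s ∈ Finset.range n,
        lo (i : EuclideanSpace ℝ (Fin d)) (kk i) (T^[s] ω) ≤
        (n : ℝ)⁻¹ * ∑ s ∈ Finset.range n, r θ (T^[s] ω) := by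
      refine mul_le_mul_of_nonneg_left ?_ (by positivity)
      exact Finset.sum_le_sum fun s _ =>
        (hsand _ hi0 (kk i) θ hθ hiball (T^[s] ω)).1
    have hIle : ∫ ω, r θ ω ∂P ≤ ∫ ω, up (i : EuclideanSpace ℝ (Fin d)) (kk i) ω ∂P :=
      integral_mono (hrint' θ hθ) (hupint _ hi0 (kk i))
        (fun ω => (hsand _ hi0 (kk i) θ hθ hiball ω).2)
    have hfin : (n : ℝ)⁻¹ * ∑ s ∈ Finset.range n,
        lo (i : EuclideanSpace ℝ (Fin d)) (kk i) (T^[s] ω) -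
        (∫ ω, lo (i : EuclideanSpace ℝ (Fin d)) (kk i) ω ∂P) ≤ -(η / 2) := by
      have hg := hkk i
      calc (n : ℝ)⁻¹ * ∑ s ∈ Finset.range n,
          lo (i : EuclideanSpace ℝ (Fin d)) (kk i) (T^[s] ω) -
          (∫ ω, lo (i : EuclideanSpace ℝ (Fin d)) (kk i) ω ∂P)
          ≤ ((∫ ω, r θ ω ∂P) - η) - (∫ ω, lo (i : EuclideanSpace ℝ (Fin d)) (kk i) ω ∂P) := by
            linarith [hAle.trans hbad]
        _ ≤ -(η / 2) := by linarith [hIle, hg]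
    refine Set.mem_biUnion hit ?_
    simp only [Set.mem_setOf_eq, Real.dist_eq]
    have := neg_le_abs ((n : ℝ)⁻¹ * ∑ s ∈ Finset.range n,
      lo (i : EuclideanSpace ℝ (Fin d)) (kk i) (T^[s] ω) -
      (∫ ω, lo (i : EuclideanSpace ℝ (Fin d)) (kk i) ω ∂P))
    linarith
  -- conclude by the mean ergodic theorem applied to each `lo i (kk i)`
  have hterm : ∀ i : ↥Θ, Tendsto (fun n : ℕ => P {ω | η / 2 ≤ dist
      ((n : ℝ)⁻¹ * ∑ s ∈ Finset.range n,
        lo (i : EuclideanSpace ℝ (Fin d)) (kk i) (T^[s] ω))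
      (∫ ω, lo (i : EuclideanSpace ℝ (Fin d)) (kk i) ω ∂P)}) atTop (𝓝 0) := by
    intro i
    exact tendstoInMeasure_iff_dist.1 (my_meanErgodic_L1 hT (hloint _ i.2 (kk i))) (η / 2) (by positivity)
  have hsum : Tendsto (fun n : ℕ => ∑ i ∈ t, P {ω | η / 2 ≤ dist
      ((n : ℝ)⁻¹ * ∑ s ∈ Finset.range n,
        lo (i : EuclideanSpace ℝ (Fin d)) (kk i) (T^[s] ω))
      (∫ ω, lo (i : EuclideanSpace ℝ (Fin d)) (kk i) ω ∂P)}) atTop (𝓝 0) := by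
    have := tendsto_finset_sum t (fun i _ => hterm i)
    simpa using this
  refine tendsto_of_tendsto_of_tendsto_of_le_of_le tendsto_const_nhds hsum
    (fun n => zero_le) (fun n => ?_)
  exact le_trans (measure_mono (hkey n)) (measure_biUnion_finset_le _ _)


end ErgodicAux

/-- In the ergodic grouped M-estimation setting, under unique minimization and identification, the estimated parameter θ̂ₙ(ω) = θ̃ₙ(τ̂ₙ(ω), ω) converges in P-measure to θ₀ = θ*(τ₀). -/
theorem grouped_Mestimation_parameter_consistency
    {Ω : Type*} [MeasurableSpace Ω] (P : Measure Ω) [IsProbabilityMeasure P]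
    (T : Ω → Ω) (hT : Ergodic T P)
    {d : ℕ} (hd : 1 ≤ d)
    (Θ : Set (EuclideanSpace ℝ (Fin d))) (hΘne : Θ.Nonempty) (hΘcomp : IsCompact Θ)
    {𝒢 : Type*} [Fintype 𝒢] [Nonempty 𝒢] [MeasurableSpace 𝒢] [MeasurableSingletonClass 𝒢]
    (ρ : EuclideanSpace ℝ (Fin d) → 𝒢 → Ω → ℝ)
    (hρcont : ∀ τ ω, ContinuousOn (fun θ => ρ θ τ ω) Θ)
    (hρmeas : ∀ θ τ, Measurable (fun ω => ρ θ τ ω))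
    (hρint : ∀ τ, Integrable (fun ω => ⨆ θ : Θ, |ρ (θ : EuclideanSpace ℝ (Fin d)) τ ω|) P)
    -- the sample criterion
    (Sn : ℕ → EuclideanSpace ℝ (Fin d) → 𝒢 → Ω → ℝ)
    (hSn : ∀ n θ τ ω, Sn n θ τ ω = (n : ℝ)⁻¹ * ∑ t ∈ Finset.range n, ρ θ τ (T^[t] ω))
    -- the population criterion
    (S : EuclideanSpace ℝ (Fin d) → 𝒢 → ℝ)
    (hS : ∀ θ τ, S θ τ = ∫ ω, ρ θ τ ω ∂P)
    -- (i) unique minimizers of the population criterion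
    (θstar : 𝒢 → EuclideanSpace ℝ (Fin d))
    (hθstar_mem : ∀ τ, θstar τ ∈ Θ)
    (hθstar_min : ∀ τ, ∀ θ ∈ Θ, S (θstar τ) τ ≤ S θ τ)
    (hθstar_uniq : ∀ τ, ∀ θ ∈ Θ, θ ≠ θstar τ → S (θstar τ) τ < S θ τ)
    -- (ii) identification of the true assignment τ0
    (τ0 : 𝒢)
    (hident : ∀ θ ∈ Θ, ∀ τ : 𝒢, τ ≠ τ0 → S (θstar τ0) τ0 < S θ τ)
    -- the profile estimators
    (θtilde : ℕ → 𝒢 → Ω → EuclideanSpace ℝ (Fin d))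
    (hθtilde_meas : ∀ n τ, Measurable (fun ω => θtilde n τ ω))
    (hθtilde_min : ∀ n τ, ∀ᵐ ω ∂P, θtilde n τ ω ∈ Θ ∧
      ∀ θ ∈ Θ, Sn n (θtilde n τ ω) τ ω ≤ Sn n θ τ ω)
    -- the estimated group assignment
    (τhat : ℕ → Ω → 𝒢)
    (hτhat_meas : ∀ n, Measurable (τhat n))
    (hτhat_min : ∀ n, ∀ᵐ ω ∂P, ∀ τ : 𝒢,
      Sn n (θtilde n (τhat n ω) ω) (τhat n ω) ω ≤ Sn n (θtilde n τ ω) τ ω) :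
    TendstoInMeasure P (fun n ω => θtilde n (τhat n ω) ω) atTop (fun _ => θstar τ0) := by
  classical
  set θ0 := θstar τ0 with hθ0def
  set m := S θ0 τ0 with hmdef
  set R : 𝒢 → Ω → ℝ := fun τ ω => ⨆ θ : Θ, |ρ (θ : EuclideanSpace ℝ (Fin d)) τ ω| with hRdef
  -- the envelope bound
  have hRb : ∀ (τ : 𝒢) (ω : Ω), ∀ θ ∈ Θ, |ρ θ τ ω| ≤ R τ ω := by
    intro τ ω θ hθ
    have hbdd : BddAbove (Set.range fun θ' : Θ => |ρ (θ' : EuclideanSpace ℝ (Fin d)) τ ω|) := by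
      have h1 : (fun θ' => |ρ θ' τ ω|) '' Θ
          = Set.range fun θ' : Θ => |ρ (θ' : EuclideanSpace ℝ (Fin d)) τ ω| :=
        Set.image_eq_range _ _
      have h2 := (hΘcomp.image_of_continuousOn (hρcont τ ω).abs).bddAbove
      rwa [h1] at h2
    exact le_ciSup hbdd ⟨θ, hθ⟩
  have hρint' : ∀ τ, ∀ θ ∈ Θ, Integrable (fun ω => ρ θ τ ω) P := by
    intro τ θ hθ
    refine (hρint τ).mono' (hρmeas θ τ).aestronglyMeasurable ?_
    exact Eventually.of_forall fun ω => by simpa [Real.norm_eq_abs] using hRb τ ω θ hθ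
  -- continuity of the population criterion
  have hScont : ∀ τ, ContinuousOn (fun θ => S θ τ) Θ := by
    intro τ θ hθ
    have : Tendsto (fun θ' => S θ' τ) (nhdsWithin θ Θ) (𝓝 (S θ τ)) := by
      rw [tendsto_iff_seq_tendsto]
      intro u hu
      rw [tendsto_nhdsWithin_iff] at hu
      simp only [hS]
      refine tendsto_integral_filter_of_dominated_convergence (R τ) ?_ ?_ (hρint τ) ?_
      · exact Eventually.of_forall fun n => (hρmeas _ τ).aestronglyMeasurable
      · filter_upwards [hu.2] with n hn
        exact Eventually.of_forall fun ω => by simpa [Real.norm_eq_abs] using hRb τ ω _ hn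
      · refine Eventually.of_forall fun ω => ?_
        exact ((hρcont τ ω θ hθ).tendsto).comp (tendsto_nhdsWithin_iff.2 hu)
    exact this
  -- start the convergence-in-measure argument
  refine tendstoInMeasure_iff_dist.2 fun ε hε => ?_
  -- construct the separation margin η1 on {dist ≥ ε}
  obtain ⟨η1, hη1pos, hη1⟩ : ∃ η1 : ℝ, 0 < η1 ∧
      ∀ θ ∈ Θ, ε ≤ dist θ θ0 → m + η1 ≤ S θ τ0 := by
    set K := Θ ∩ {θ | ε ≤ dist θ θ0} with hK
    have hKcomp : IsCompact K :=
      hΘcomp.inter_right (isClosed_le continuous_const ((continuous_id.dist continuous_const)))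
    rcases Set.eq_empty_or_nonempty K with hKe | hKne
    · refine ⟨1, one_pos, fun θ hθ hdist => absurd ?_ (Set.notMem_empty θ)⟩
      rw [← hKe]; exact ⟨hθ, hdist⟩
    · obtain ⟨θ1, hθ1K, hθ1min⟩ := hKcomp.exists_isMinOn hKne
        ((hScont τ0).mono Set.inter_subset_left)
      have hθ1Θ : θ1 ∈ Θ := hθ1K.1
      have hθ1ne : θ1 ≠ θ0 := by
        intro hcon
        have := hθ1K.2
        rw [hcon] at this
        simp only [Set.mem_setOf_eq, dist_self] at this
        linarith
      have hgt : m < S θ1 τ0 := hθstar_uniq τ0 θ1 hθ1Θ hθ1ne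
      refine ⟨S θ1 τ0 - m, by linarith, fun θ hθ hdist => ?_⟩
      have := hθ1min (Set.mem_inter hθ hdist)
      simp only [Set.mem_setOf_eq] at this
      linarith
  -- construct the identification margin η2
  obtain ⟨η2, hη2pos, hη2⟩ : ∃ η2 : ℝ, 0 < η2 ∧
      ∀ τ : 𝒢, τ ≠ τ0 → ∀ θ ∈ Θ, m + η2 ≤ S θ τ := by
    by_cases hall : ∀ τ : 𝒢, τ = τ0
    · exact ⟨1, one_pos, fun τ hτ => absurd (hall τ) hτ⟩
    · push_neg at hall
      obtain ⟨τ1, hτ1⟩ := hall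
      set F := Finset.univ.filter (fun τ : 𝒢 => τ ≠ τ0) with hF
      have hFne : F.Nonempty := ⟨τ1, by simp [hF, hτ1]⟩
      refine ⟨(F.inf' hFne fun τ => S (θstar τ) τ) - m, ?_, ?_⟩
      · rw [sub_pos, Finset.lt_inf'_iff]
        intro τ hτ
        have hτne : τ ≠ τ0 := by simpa [hF] using hτ
        exact hident (θstar τ) (hθstar_mem τ) τ hτne
      · intro τ hτ θ hθ
        have h1 : F.inf' hFne (fun τ => S (θstar τ) τ) ≤ S (θstar τ) τ :=
          Finset.inf'_le _ (by simp [hF, hτ])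
        have h2 := hθstar_min τ θ hθ
        linarith
  set η := min η1 η2 with hηdef
  have hηpos : 0 < η := lt_min hη1pos hη2pos
  set η3 := η / 3 with hη3def
  have hη3pos : 0 < η3 := by rw [hη3def]; positivity
  -- the two sources of smallness
  have hpoint := tendstoInMeasure_iff_dist.1 (my_meanErgodic_L1 hT (hρint' τ0 θ0 (hθstar_mem τ0))) η3 hη3pos
  have hunif : ∀ τ : 𝒢, Tendsto (fun n : ℕ => P {ω | ∃ θ ∈ Θ,
      (n : ℝ)⁻¹ * ∑ t ∈ Finset.range n, ρ θ τ (T^[t] ω) ≤ (∫ ω, ρ θ τ ω ∂P) - η3})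
      atTop (𝓝 0) := by
    intro τ
    exact my_uniform_lower hT hΘne hΘcomp (fun θ ω => ρ θ τ ω) (hρcont τ)
      (fun θ => hρmeas θ τ) (R τ) (hρint τ) (hRb τ) hη3pos
  -- the bad events
  set bad1 : 𝒢 → ℕ → Set Ω := fun τ n => {ω | ∃ θ ∈ Θ,
    (n : ℝ)⁻¹ * ∑ t ∈ Finset.range n, ρ θ τ (T^[t] ω) ≤ (∫ ω, ρ θ τ ω ∂P) - η3} with hbad1
  set bad2 : ℕ → Set Ω := fun n => {ω | η3 ≤ dist
    ((n : ℝ)⁻¹ * ∑ t ∈ Finset.range n, ρ θ0 τ0 (T^[t] ω)) (∫ ω, ρ θ0 τ0 ω ∂P)} with hbad2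
  -- the a.e. inclusion
  have hincl : ∀ n : ℕ, {ω | ε ≤ dist (θtilde n (τhat n ω) ω) (θstar τ0)} ≤ᵐ[P]
      (((⋃ τ : 𝒢, bad1 τ n) ∪ bad2 n : Set Ω)) := by
    intro n
    have hgood := (ae_all_iff.2 (fun τ : 𝒢 => hθtilde_min n τ)).and (hτhat_min n)
    filter_upwards [hgood] with ω hω
    intro hmem
    by_contra hcon
    have hcon' : ω ∉ ((⋃ τ : 𝒢, bad1 τ n) ∪ bad2 n : Set Ω) := hcon
    simp only [Set.mem_union, Set.mem_iUnion, not_or, not_exists] at hcon'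
    obtain ⟨hnot1, hnot2⟩ := hcon'
    have hnot1' : ∀ (τ : 𝒢) (θ : EuclideanSpace ℝ (Fin d)), θ ∈ Θ →
        S θ τ - η3 < Sn n θ τ ω := by
      intro τ θ hθ
      have h1 : ω ∉ bad1 τ n := hnot1 τ
      rw [hbad1] at h1
      simp only [Set.mem_setOf_eq] at h1
      push_neg at h1
      have h2 := h1 θ hθ
      rw [hSn n θ τ ω, hS θ τ]
      linarith
    have hnot2' : Sn n θ0 τ0 ω < m + η3 := by
      simp only [hbad2, Set.mem_setOf_eq, not_le, Real.dist_eq] at hnot2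
      rw [hSn n θ0 τ0 ω, hmdef, hS θ0 τ0]
      have := abs_lt.1 hnot2
      linarith [this.2]
    have h1 : θtilde n (τhat n ω) ω ∈ Θ := (hω.1 (τhat n ω)).1
    have h2 := hω.2 τ0
    have h3 := (hω.1 τ0).2 θ0 (hθstar_mem τ0)
    have h5 := hnot1' (τhat n ω) _ h1
    have hmem' : ε ≤ dist (θtilde n (τhat n ω) ω) (θstar τ0) := hmem
    rcases eq_or_ne (τhat n ω) τ0 with hττ | hττ
    · rw [hττ] at h1 hmem' h5
      have h6 := hη1 _ h1 hmem'
      have hle : η ≤ η1 := min_le_left _ _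
      linarith [h3, hnot2', h5, h6, hη3def]
    · have h6 := hη2 (τhat n ω) hττ _ h1
      have hle : η ≤ η2 := min_le_right _ _
      linarith [h2, h3, hnot2', h5, h6, hη3def]
  -- measure bound per n and conclusion
  have hPn : ∀ n : ℕ, P {ω | ε ≤ dist (θtilde n (τhat n ω) ω) (θstar τ0)} ≤
      (∑ τ : 𝒢, P (bad1 τ n)) + P (bad2 n) := by
    intro n
    refine le_trans (measure_mono_ae (hincl n)) ?_
    refine le_trans (measure_union_le _ _) (add_le_add ?_ le_rfl)
    have heq : (⋃ τ : 𝒢, bad1 τ n) = ⋃ τ ∈ Finset.univ, bad1 τ n := by simp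
    rw [heq]
    exact le_trans (measure_biUnion_finset_le _ _) (by simp)
  have hlim : Tendsto (fun n : ℕ => (∑ τ : 𝒢, P (bad1 τ n)) + P (bad2 n)) atTop (𝓝 0) := by
    have h1 : Tendsto (fun n : ℕ => ∑ τ : 𝒢, P (bad1 τ n)) atTop (𝓝 0) := by
      have := tendsto_finset_sum Finset.univ (fun (τ : 𝒢) (_ : τ ∈ Finset.univ) => hunif τ)
      simpa using this
    have h2 := h1.add hpoint
    simpa using h2
  exact tendsto_of_tendsto_of_tendsto_of_le_of_le tendsto_const_nhds hlim
    (fun n => zero_le) hPn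
end

section
/- Under the ergodic grouped M-estimation setting, fix τ ∈ 𝒢 and assume that the population criterion S(·, τ) attains a unique minimum on Θ at a point θ*(τ). Let θ̃ₙ : Ω → Θ be measurable maps such that for P-almost every ω, Sₙ(θ̃ₙ(ω), τ)(ω) = min_{θ∈Θ} Sₙ(θ, τ)(ω). Then the minimized sample criterion converges to the minimized population criterion in probability: the real random variables ω ↦ Sₙ(θ̃ₙ(ω), τ)(ω) converge in P-measure to the constant S(θ*(τ), τ) as n → ∞. -/
set_option maxHeartbeats 1000000
set_option synthInstance.maxHeartbeats 400000

open MeasureTheory Filter Topology Function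
open scoped ENNReal NNReal

section Aux

variable {Ω : Type*} [MeasurableSpace Ω] {P : Measure Ω} [IsProbabilityMeasure P]
  {T : Ω → Ω}

lemma Lp_coeFn_finset_sum {ι : Type*} (s : Finset ι) (f : ι → Lp ℝ 2 P) :
    (↑(∑ i ∈ s, f i) : Ω → ℝ) =ᵐ[P] fun ω => ∑ i ∈ s, (f i : Ω → ℝ) ω := by
  classical
  induction s using Finset.induction_on with
  | empty => simp only [Finset.sum_empty]; exact Lp.coeFn_zero (E := ℝ) (p := 2) (μ := P)
  | insert a s h ih =>
      rw [Finset.sum_insert h]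
      refine (Lp.coeFn_add _ _).trans ?_
      filter_upwards [ih] with ω hω
      rw [Finset.sum_insert h]
      simp only [Pi.add_apply]
      rw [hω]

lemma koopman_iterate_coeFn (hTm : MeasurePreserving T P P) (x : Lp ℝ 2 P) (k : ℕ) :
    (((Lp.compMeasurePreservingₗᵢ ℝ T hTm (p := 2)).toContinuousLinearMap)^[k] x : Ω → ℝ)
      =ᵐ[P] fun ω => x (T^[k] ω) := by
  induction k with
  | zero => simp [Filter.EventuallyEq.refl]
  | succ k ih =>
      rw [Function.iterate_succ_apply']
      refine (Lp.coeFn_compMeasurePreserving _ _).trans ?_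
      refine (hTm.quasiMeasurePreserving.ae_eq_comp ih).trans ?_
      filter_upwards with ω
      simp [Function.comp, Function.iterate_succ_apply]

lemma birkhoff_L2 (hT : Ergodic T P) {g : Ω → ℝ} (hg : MemLp g 2 P) :
    Tendsto (fun n : ℕ => eLpNorm
      (fun ω => (n:ℝ)⁻¹ * ∑ t ∈ Finset.range n, g (T^[t] ω) - ∫ ω', g ω' ∂P) 2 P)
      atTop (𝓝 0) := by
  set U := (Lp.compMeasurePreservingₗᵢ ℝ T hT.toMeasurePreserving
      (p := 2) (E := ℝ)).toContinuousLinearMap with hUdef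
  set x : Lp ℝ 2 P := hg.toLp g with hxdef
  set c : ℝ := ∫ ω', g ω' ∂P with hcdef
  set y : Lp ℝ 2 P := (memLp_const c).toLp (fun _ => c) with hydef
  have hU : ‖U‖ ≤ 1 := (Lp.compMeasurePreservingₗᵢ ℝ T hT.toMeasurePreserving (p := 2) (E := ℝ)).norm_toContinuousLinearMap_le
  have key := U.tendsto_birkhoffAverage_orthogonalProjection hU x
  -- identify the projection with y
  have hUy : U y = y := by
    refine Lp.ext ?_
    refine (Lp.coeFn_compMeasurePreserving _ _).trans ?_
    have h1 : (y : Ω → ℝ) =ᵐ[P] fun _ => c := MemLp.coeFn_toLp _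
    refine ((hT.toMeasurePreserving.quasiMeasurePreserving.ae_eq_comp h1).trans ?_).trans h1.symm
    exact Filter.Eventually.of_forall fun ω => rfl
  have hproj : ((Submodule.orthogonalProjectionOnto (U.eqLocus (1 : Lp ℝ 2 P →L[ℝ] Lp ℝ 2 P)) x : _) : Lp ℝ 2 P) = y := by
    refine Submodule.eq_starProjection_of_mem_of_inner_eq_zero ?_ ?_
    · rw [LinearMap.mem_eqLocus]; simpa using hUy
    · intro w hw
      rw [LinearMap.mem_eqLocus] at hw
      have hwT : (w : Ω → ℝ) ∘ T =ᵐ[P] (w : Ω → ℝ) := by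
        have := (Lp.coeFn_compMeasurePreserving w hT.toMeasurePreserving).symm
        calc (w : Ω → ℝ) ∘ T =ᵐ[P] (U w : Ω → ℝ) := (Lp.coeFn_compMeasurePreserving _ _).symm
        _ = (w : Ω → ℝ) := by rw [show U w = w from by simpa using hw]
      obtain ⟨cw, hcw⟩ := hT.ae_eq_const_of_ae_eq_comp_ae (Lp.aestronglyMeasurable w) hwT
      have hinner : (inner ℝ (x - y) w : ℝ) = ∫ ω, ((x - y : Lp ℝ 2 P) : Ω → ℝ) ω * (w : Ω → ℝ) ω ∂P := by
        rw [L2.inner_def]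
        simp [RCLike.inner_apply, mul_comm]
      rw [hinner]
      have hxy : ((x - y : Lp ℝ 2 P) : Ω → ℝ) =ᵐ[P] fun ω => g ω - c := by
        refine (Lp.coeFn_sub x y).trans ?_
        filter_upwards [MemLp.coeFn_toLp hg, MemLp.coeFn_toLp (memLp_const (μ := P) c)] with ω h1 h2
        show _ = _
        rw [Pi.sub_apply, h1]
        congr 1
      have : (fun ω => ((x - y : Lp ℝ 2 P) : Ω → ℝ) ω * (w : Ω → ℝ) ω)
          =ᵐ[P] fun ω => (g ω - c) * cw := by
        filter_upwards [hxy, hcw] with ω h1 h2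
        rw [h1, h2]
        rfl
      rw [integral_congr_ae this]
      have hgint : Integrable g P := hg.integrable one_le_two
      rw [integral_mul_const, integral_sub hgint (integrable_const c)]
      simp [hcdef]
  rw [hproj] at key
  -- identify birkhoffAverage with the explicit averages
  have havg : ∀ n, ((birkhoffAverage ℝ (⇑U) _root_.id n x : Lp ℝ 2 P) : Ω → ℝ)
      =ᵐ[P] fun ω => (n:ℝ)⁻¹ * ∑ t ∈ Finset.range n, g (T^[t] ω) := by
    intro n
    rw [birkhoffAverage, birkhoffSum]
    refine (Lp.coeFn_smul _ _).trans ?_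
    have h1 := Lp_coeFn_finset_sum (Finset.range n) (fun k => (⇑U)^[k] x)
    have h2 : ∀ k ∈ Finset.range n,
        (((⇑U)^[k] x : Lp ℝ 2 P) : Ω → ℝ) =ᵐ[P] fun ω => g (T^[k] ω) := by
      intro k _
      refine (koopman_iterate_coeFn hT.toMeasurePreserving x k).trans ?_
      have := hT.toMeasurePreserving.iterate k
      exact this.quasiMeasurePreserving.ae_eq_comp (MemLp.coeFn_toLp hg)
    filter_upwards [h1, (eventually_all_finset (Finset.range n)).2 h2] with ω hω1 hω2
    simp only [id_eq, Pi.smul_apply, smul_eq_mul]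
    rw [hω1]
    congr 1
    exact Finset.sum_congr rfl hω2
  -- conclude
  have hnorm : Tendsto (fun n => ‖birkhoffAverage ℝ (⇑U) _root_.id n x - y‖) atTop (𝓝 0) := by
    rw [← tendsto_iff_norm_sub_tendsto_zero] ; exact key
  have heq : ∀ n : ℕ, eLpNorm
      (fun ω => (n:ℝ)⁻¹ * ∑ t ∈ Finset.range n, g (T^[t] ω) - c) 2 P
      = ENNReal.ofReal ‖birkhoffAverage ℝ (⇑U) _root_.id n x - y‖ := by
    intro n
    have h1 : (fun ω => (n:ℝ)⁻¹ * ∑ t ∈ Finset.range n, g (T^[t] ω) - c)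
        =ᵐ[P] ((birkhoffAverage ℝ (⇑U) _root_.id n x - y : Lp ℝ 2 P) : Ω → ℝ) := by
      filter_upwards [havg n, Lp.coeFn_sub (birkhoffAverage ℝ (⇑U) _root_.id n x) y,
        MemLp.coeFn_toLp (memLp_const (μ := P) c)] with ω hω1 hω2 hω3
      rw [hω2, Pi.sub_apply, hω1, hω3]
    rw [eLpNorm_congr_ae h1, Lp.norm_def, ENNReal.ofReal_toReal (Lp.eLpNorm_ne_top _)]
  refine Tendsto.congr (fun n => (heq n).symm) ?_
  have : Tendsto (fun n => ENNReal.ofReal ‖birkhoffAverage ℝ (⇑U) _root_.id n x - y‖)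
      atTop (𝓝 (ENNReal.ofReal 0)) := (ENNReal.continuous_ofReal.tendsto 0).comp hnorm
  simpa using this


lemma avg_aesm (hTm : MeasurePreserving T P P) {u : Ω → ℝ}
    (hu : AEStronglyMeasurable u P) (n : ℕ) :
    AEStronglyMeasurable (fun ω => (n:ℝ)⁻¹ * ∑ t ∈ Finset.range n, u (T^[t] ω)) P := by
  refine AEStronglyMeasurable.const_mul ?_ _
  refine Finset.aestronglyMeasurable_fun_sum _ fun t _ => ?_
  exact hu.comp_quasiMeasurePreserving (hTm.iterate t).quasiMeasurePreserving

lemma avg_eLpNorm_le (hTm : MeasurePreserving T P P) {u : Ω → ℝ}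
    (hu : AEStronglyMeasurable u P) (n : ℕ) :
    eLpNorm (fun ω => (n:ℝ)⁻¹ * ∑ t ∈ Finset.range n, u (T^[t] ω)) 1 P
      ≤ eLpNorm u 1 P := by
  rcases Nat.eq_zero_or_pos n with hn | hn
  · subst hn; simp
  have h0 : (fun ω => (n:ℝ)⁻¹ * ∑ t ∈ Finset.range n, u (T^[t] ω))
      = (n:ℝ)⁻¹ • (∑ t ∈ Finset.range n, fun ω => u (T^[t] ω)) := by
    funext ω; simp [Finset.sum_apply]
  rw [h0, eLpNorm_const_smul]
  have h1 : eLpNorm (∑ t ∈ Finset.range n, fun ω => u (T^[t] ω)) 1 P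
      ≤ ∑ t ∈ Finset.range n, eLpNorm (fun ω => u (T^[t] ω)) 1 P := by
    refine eLpNorm_sum_le (fun t _ => ?_) le_rfl
    exact hu.comp_quasiMeasurePreserving (hTm.iterate t).quasiMeasurePreserving
  have h2 : ∀ t, eLpNorm (fun ω => u (T^[t] ω)) 1 P = eLpNorm u 1 P := fun t =>
    eLpNorm_comp_measurePreserving hu (hTm.iterate t)
  calc (‖(n:ℝ)⁻¹‖₊ : ℝ≥0∞) • eLpNorm (∑ t ∈ Finset.range n, fun ω => u (T^[t] ω)) 1 P
      ≤ (‖(n:ℝ)⁻¹‖₊ : ℝ≥0∞) * ∑ t ∈ Finset.range n, eLpNorm (fun ω => u (T^[t] ω)) 1 P := by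
        rw [smul_eq_mul]; exact mul_le_mul_right h1 _
    _ = (‖(n:ℝ)⁻¹‖₊ : ℝ≥0∞) * (n * eLpNorm u 1 P) := by
        rw [Finset.sum_congr rfl fun t _ => h2 t, Finset.sum_const, Finset.card_range,
          nsmul_eq_mul]
    _ ≤ eLpNorm u 1 P := by
        rw [← mul_assoc]
        refine mul_le_of_le_one_left' ?_ |>.trans le_rfl
        have : (‖(n:ℝ)⁻¹‖₊ : ℝ≥0∞) = (ENNReal.ofReal (n:ℝ))⁻¹ := by
          rw [← ENNReal.ofReal_inv_of_pos (by exact_mod_cast hn)]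
          rw [ENNReal.ofReal, ENNReal.coe_inj]
          ext
          simp [Real.norm_of_nonneg (by positivity : (0:ℝ) ≤ ((n:ℝ))⁻¹),
            Real.toNNReal, max_eq_left (by positivity : (0:ℝ) ≤ ((n:ℝ))⁻¹)]
        rw [this, ENNReal.ofReal_natCast]
        rw [ENNReal.inv_mul_cancel (by exact_mod_cast hn.ne') (by simp)]

lemma birkhoff_L1 (hT : Ergodic T P) {g : Ω → ℝ}
    (hgm : AEStronglyMeasurable g P) (hgi : Integrable g P) :
    Tendsto (fun n : ℕ => eLpNorm
      (fun ω => (n:ℝ)⁻¹ * ∑ t ∈ Finset.range n, g (T^[t] ω) - ∫ ω', g ω' ∂P) 1 P)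
      atTop (𝓝 0) := by
  rw [ENNReal.tendsto_atTop_zero]
  intro ε hε
  rcases eq_top_or_lt_top ε with rfl | hεtop
  · exact ⟨0, fun n _ => le_top⟩
  have hε3 : ε / 3 ≠ 0 := by
    simp only [ne_eq, ENNReal.div_eq_zero_iff]
    push_neg
    exact ⟨hε.ne', by norm_num⟩
  obtain ⟨h, hh_lt, hh_mem⟩ :=
    (memLp_one_iff_integrable.mpr hgi).exists_simpleFunc_eLpNorm_sub_lt ENNReal.one_ne_top hε3
  have hh2 : MemLp (⇑h) 2 P := (h.memLp_top P).mono_exponent le_top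
  have hhsm : AEStronglyMeasurable (⇑h) P := hh2.aestronglyMeasurable
  set c : ℝ := ∫ ω', g ω' ∂P with hc
  set ch : ℝ := ∫ ω', h ω' ∂P with hch
  have hhint : Integrable (⇑h) P := hh2.integrable one_le_two
  -- the L2 part
  have hL2 := birkhoff_L2 hT hh2
  have hL1h : Tendsto (fun n : ℕ => eLpNorm
      (fun ω => (n:ℝ)⁻¹ * ∑ t ∈ Finset.range n, h (T^[t] ω) - ch) 1 P) atTop (𝓝 0) := by
    have hle : ∀ n : ℕ, eLpNorm
        (fun ω => (n:ℝ)⁻¹ * ∑ t ∈ Finset.range n, h (T^[t] ω) - ch) 1 P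
        ≤ eLpNorm (fun ω => (n:ℝ)⁻¹ * ∑ t ∈ Finset.range n, h (T^[t] ω) - ch) 2 P :=
      fun n => eLpNorm_le_eLpNorm_of_exponent_le one_le_two
        ((avg_aesm hT.toMeasurePreserving hhsm n).sub aestronglyMeasurable_const)
    refine tendsto_of_tendsto_of_tendsto_of_le_of_le tendsto_const_nhds hL2
      (fun n => zero_le) hle
  obtain ⟨N, hN⟩ := (ENNReal.tendsto_atTop_zero.mp hL1h) (ε / 3) (by
    exact lt_of_le_of_ne zero_le (Ne.symm hε3))
  refine ⟨N, fun n hn => ?_⟩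
  -- decompose
  have hdecomp : (fun ω => (n:ℝ)⁻¹ * ∑ t ∈ Finset.range n, g (T^[t] ω) - c)
      = (fun ω => (n:ℝ)⁻¹ * ∑ t ∈ Finset.range n, (g - ⇑h) (T^[t] ω))
        + ((fun ω => (n:ℝ)⁻¹ * ∑ t ∈ Finset.range n, h (T^[t] ω) - ch)
          + (fun _ => ch - c)) := by
    funext ω
    simp only [Pi.add_apply, Pi.sub_apply, Finset.sum_sub_distrib, mul_sub]
    ring
  have hsm1 : AEStronglyMeasurable
      (fun ω => (n:ℝ)⁻¹ * ∑ t ∈ Finset.range n, (g - ⇑h) (T^[t] ω)) P :=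
    avg_aesm hT.toMeasurePreserving (hgm.sub hhsm) n
  have hsm2 : AEStronglyMeasurable
      (fun ω => (n:ℝ)⁻¹ * ∑ t ∈ Finset.range n, h (T^[t] ω) - ch) P :=
    (avg_aesm hT.toMeasurePreserving hhsm n).sub aestronglyMeasurable_const
  calc eLpNorm (fun ω => (n:ℝ)⁻¹ * ∑ t ∈ Finset.range n, g (T^[t] ω) - c) 1 P
      ≤ eLpNorm (fun ω => (n:ℝ)⁻¹ * ∑ t ∈ Finset.range n, (g - ⇑h) (T^[t] ω)) 1 P
        + (eLpNorm (fun ω => (n:ℝ)⁻¹ * ∑ t ∈ Finset.range n, h (T^[t] ω) - ch) 1 P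
          + eLpNorm (fun _ : Ω => ch - c) 1 P) := by
        rw [hdecomp]
        refine (eLpNorm_add_le hsm1 (hsm2.add aestronglyMeasurable_const) le_rfl).trans ?_
        exact add_le_add_right (eLpNorm_add_le hsm2 aestronglyMeasurable_const le_rfl) _
    _ ≤ ε / 3 + (ε / 3 + ε / 3) := by
        refine add_le_add ?_ (add_le_add (hN n hn) ?_)
        · refine (avg_eLpNorm_le hT.toMeasurePreserving (hgm.sub hhsm) n).trans ?_
          exact (le_of_lt hh_lt)
        · -- constant term
          have h1 : eLpNorm (fun _ : Ω => ch - c) 1 P = ‖ch - c‖ₑ := by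
            rw [eLpNorm_const _ one_ne_zero (by simp [IsProbabilityMeasure.ne_zero])]
            simp
          have h2 : ch - c = ∫ ω', (h ω' - g ω') ∂P := by
            rw [integral_sub hhint hgi]
          rw [h1, h2]
          refine le_trans (enorm_integral_le_lintegral_enorm _) ?_
          have h3 : ∫⁻ ω', ‖h ω' - g ω'‖ₑ ∂P
              = eLpNorm (fun ω' => h ω' - g ω') 1 P :=
            (eLpNorm_one_eq_lintegral_enorm).symm
          rw [h3]
          have h4 : eLpNorm (fun ω' => h ω' - g ω') 1 P = eLpNorm (g - ⇑h) 1 P := by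
            rw [show (fun ω' => h ω' - g ω') = -(g - ⇑h) from by
              funext ω'; simp, eLpNorm_neg]
          rw [h4]; exact le_of_lt hh_lt
    _ ≤ ε := le_of_eq (by rw [← add_assoc]; exact ENNReal.add_thirds ε)

lemma birkhoff_inMeasure (hT : Ergodic T P) {g : Ω → ℝ}
    (hgm : AEStronglyMeasurable g P) (hgi : Integrable g P) :
    TendstoInMeasure P
      (fun (n : ℕ) ω => (n:ℝ)⁻¹ * ∑ t ∈ Finset.range n, g (T^[t] ω)) atTop
      (fun _ => ∫ ω', g ω' ∂P) := by
  refine tendstoInMeasure_of_tendsto_eLpNorm one_ne_zero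
    (fun n => avg_aesm hT.toMeasurePreserving hgm n) aestronglyMeasurable_const ?_
  have h := birkhoff_L1 hT hgm hgi
  refine h.congr (fun n => ?_)
  apply eLpNorm_congr_ae
  filter_upwards with ω
  rfl

end Aux

lemma exists_lower_bracket {E : Type*} [MetricSpace E] [SecondCountableTopology E]
    (Θ : Set E) (hΘcomp : IsCompact Θ)
    {Ω : Type*} [MeasurableSpace Ω] {P : Measure Ω} [IsProbabilityMeasure P]
    (f : E → Ω → ℝ)
    (hcont : ∀ ω, ContinuousOn (fun θ => f θ ω) Θ)
    (hmeas : ∀ θ, Measurable (f θ))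
    (G : Ω → ℝ) (hGint : Integrable G P)
    (hbound : ∀ θ ∈ Θ, ∀ ω, |f θ ω| ≤ G ω)
    {θ0 : E} (hθ0 : θ0 ∈ Θ) {ε : ℝ} (hε : 0 < ε) :
    ∃ δ > 0, ∃ g : Ω → ℝ, Measurable g ∧ Integrable g P ∧
      (∀ θ ∈ Θ ∩ Metric.ball θ0 δ, ∀ ω, g ω ≤ f θ ω) ∧
      (∫ ω, f θ0 ω ∂P) - ε ≤ ∫ ω, g ω ∂P := by
  -- countable dense subset of Θ
  obtain ⟨D₀, hD₀c, hD₀d⟩ := TopologicalSpace.exists_countable_dense ↥Θ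
  set D : Set E := Subtype.val '' D₀ with hD
  have hDsub : D ⊆ Θ := by rintro _ ⟨⟨x, hx⟩, _, rfl⟩; exact hx
  have hDc : D.Countable := hD₀c.image _
  have hDdense : ∀ θ ∈ Θ, ∀ O : Set E, IsOpen O → θ ∈ O → (D ∩ O).Nonempty := by
    intro θ hθ O hO hθO
    have hV : IsOpen (Subtype.val ⁻¹' O : Set ↥Θ) := hO.preimage continuous_subtype_val
    obtain ⟨d₀, hd₀D, hd₀V⟩ := hD₀d.exists_mem_open hV ⟨⟨θ, hθ⟩, hθO⟩
    exact ⟨d₀.1, ⟨d₀, hd₀D, rfl⟩, hd₀V⟩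
  -- the lower envelope over D ∩ ball
  set lo : ℝ → Ω → ℝ := fun δ ω => ⨅ θ : ↥(D ∩ Metric.ball θ0 δ), f θ ω with hlo
  have hne : ∀ δ : ℝ, 0 < δ → (D ∩ Metric.ball θ0 δ).Nonempty := fun δ hδ =>
    hDdense θ0 hθ0 _ Metric.isOpen_ball (Metric.mem_ball_self hδ)
  have hbdd : ∀ (δ : ℝ) (ω : Ω),
      BddBelow (Set.range fun θ : ↥(D ∩ Metric.ball θ0 δ) => f θ ω) := by
    intro δ ω
    refine ⟨-G ω, ?_⟩
    rintro _ ⟨⟨θ, hθD, _⟩, rfl⟩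
    have := hbound θ (hDsub hθD) ω
    linarith [abs_le.mp this |>.1]
  have hlo_le : ∀ δ > 0, ∀ θ ∈ Θ ∩ Metric.ball θ0 δ, ∀ ω, lo δ ω ≤ f θ ω := by
    intro δ hδ θ hθ ω
    refine le_of_forall_pos_le_add fun η hη => ?_
    have hcw : ContinuousWithinAt (fun θ' => f θ' ω) Θ θ := hcont ω θ hθ.1
    have hev : {θ' | f θ' ω < f θ ω + η} ∈ nhdsWithin θ Θ :=
      hcw (IsOpen.mem_nhds (isOpen_Iio (a := f θ ω + η)) (by simp [hη]))
    rw [mem_nhdsWithin] at hev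
    obtain ⟨O, hOopen, hθO, hOsub⟩ := hev
    obtain ⟨dd, hddD, hddO⟩ := hDdense θ hθ.1 (O ∩ Metric.ball θ0 δ)
      (hOopen.inter Metric.isOpen_ball) ⟨hθO, hθ.2⟩
    have h1 : lo δ ω ≤ f dd ω := ciInf_le (hbdd δ ω) ⟨dd, hddD, hddO.2⟩
    have h2 : f dd ω < f θ ω + η := hOsub ⟨hddO.1, hDsub hddD⟩
    linarith
  have hlo_ge : ∀ (δ : ℝ), 0 < δ → ∀ ω, -G ω ≤ lo δ ω := by
    intro δ hδ ω
    haveI : Nonempty ↥(D ∩ Metric.ball θ0 δ) := (hne δ hδ).to_subtype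
    refine le_ciInf fun θ => ?_
    have := hbound θ (hDsub θ.2.1) ω
    linarith [abs_le.mp this |>.1]
  have hlo_abs : ∀ δ > 0, ∀ ω, |lo δ ω| ≤ G ω := by
    intro δ hδ ω
    rw [abs_le]
    constructor
    · linarith [hlo_ge δ hδ ω]
    · obtain ⟨dd, hdd⟩ := hne δ hδ
      have h1 : lo δ ω ≤ f dd ω := ciInf_le (hbdd δ ω) ⟨dd, hdd⟩
      have h2 := hbound dd (hDsub hdd.1) ω
      linarith [abs_le.mp h2 |>.2]
  have hlo_meas : ∀ δ : ℝ, Measurable (lo δ) := by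
    intro δ
    haveI : Countable ↥(D ∩ Metric.ball θ0 δ) :=
      (hDc.mono Set.inter_subset_left).to_subtype
    exact Measurable.iInf fun θ => hmeas θ
  have hlo_int : ∀ δ > 0, Integrable (lo δ) P := by
    intro δ hδ
    refine Integrable.mono hGint (hlo_meas δ).aestronglyMeasurable ?_
    filter_upwards with ω
    rw [Real.norm_eq_abs, Real.norm_eq_abs]
    exact (hlo_abs δ hδ ω).trans (le_abs_self _)
  -- pointwise convergence as δ = 1/(k+1) → 0
  have hptwise : ∀ ω, Tendsto (fun k : ℕ => lo (1 / (k + 1)) ω) atTop (𝓝 (f θ0 ω)) := by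
    intro ω
    rw [Metric.tendsto_atTop]
    intro η hη
    have hcw : ContinuousWithinAt (fun θ' => f θ' ω) Θ θ0 := hcont ω θ0 hθ0
    rw [Metric.continuousWithinAt_iff] at hcw
    obtain ⟨δη, hδη, hδηprop⟩ := hcw (η / 2) (by linarith)
    obtain ⟨K, hK⟩ := exists_nat_gt (1 / δη)
    refine ⟨K, fun k hk => ?_⟩
    have hkpos : (0:ℝ) < 1 / (k + 1) := by positivity
    have hksmall : 1 / ((k:ℝ) + 1) < δη := by
      rw [div_lt_iff₀ (by positivity)]
      rw [div_lt_iff₀ hδη] at hK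
      calc (1:ℝ) < δη * K := by rw [mul_comm]; exact hK
        _ ≤ δη * (k + 1) := by
            have : (K:ℝ) ≤ (k:ℝ) + 1 := by exact_mod_cast Nat.le_succ_of_le hk
            nlinarith
    have hub : lo (1 / (k + 1)) ω ≤ f θ0 ω :=
      hlo_le _ hkpos θ0 ⟨hθ0, Metric.mem_ball_self hkpos⟩ ω
    have hlb : f θ0 ω - η / 2 ≤ lo (1 / (k + 1)) ω := by
      haveI : Nonempty ↥(D ∩ Metric.ball θ0 (1 / (k + 1))) := (hne _ hkpos).to_subtype
      refine le_ciInf fun θ => ?_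
      have hθΘ : (θ : E) ∈ Θ := hDsub θ.2.1
      have hθd : dist (θ : E) θ0 < δη := lt_trans (Metric.mem_ball.mp θ.2.2) hksmall
      have := hδηprop hθΘ hθd
      rw [Real.dist_eq] at this
      have := abs_lt.mp this |>.1
      linarith
    rw [Real.dist_eq, abs_lt]
    constructor <;> linarith
  -- dominated convergence
  have hdct : Tendsto (fun k : ℕ => ∫ ω, lo (1 / (k + 1)) ω ∂P) atTop
      (𝓝 (∫ ω, f θ0 ω ∂P)) := by
    refine tendsto_integral_of_dominated_convergence G
      (fun k => (hlo_meas _).aestronglyMeasurable) hGint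
      (fun k => ?_) (Filter.Eventually.of_forall hptwise)
    filter_upwards with ω
    rw [Real.norm_eq_abs]
    exact hlo_abs _ (by positivity) ω
  have hev : ∀ᶠ k : ℕ in atTop, (∫ ω, f θ0 ω ∂P) - ε ≤ ∫ ω, lo (1 / (k + 1)) ω ∂P := by
    exact hdct.eventually (eventually_ge_nhds
      (show (∫ ω, f θ0 ω ∂P) - ε < ∫ ω, f θ0 ω ∂P by linarith))
  obtain ⟨k, hk⟩ := hev.exists
  exact ⟨1 / (k + 1), by positivity, lo (1 / (k + 1)), hlo_meas _,
    hlo_int _ (by positivity), hlo_le _ (by positivity), hk⟩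

open MeasureTheory Filter Topology

/-- In the ergodic grouped M-estimation setting, for a fixed group assignment
`τ`, if the population criterion `S(·, τ)` attains a unique minimum on `Θ` at `θstar`, then
the minimized sample criterion `Sₙ(θ̃ₙ, τ)` converges in P-measure to `S(θstar, τ)`. -/
theorem grouped_Mestimation_minimized_criterion_consistency
    {Ω : Type*} [MeasurableSpace Ω] (P : Measure Ω) [IsProbabilityMeasure P]
    (T : Ω → Ω) (hT : Ergodic T P)
    {d : ℕ} (hd : 1 ≤ d)
    (Θ : Set (EuclideanSpace ℝ (Fin d))) (hΘne : Θ.Nonempty) (hΘcomp : IsCompact Θ)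
    {𝒢 : Type*} [Fintype 𝒢] [Nonempty 𝒢]
    (ρ : EuclideanSpace ℝ (Fin d) → 𝒢 → Ω → ℝ)
    (hρcont : ∀ τ ω, ContinuousOn (fun θ => ρ θ τ ω) Θ)
    (hρmeas : ∀ θ τ, Measurable (fun ω => ρ θ τ ω))
    (hρint : ∀ τ, Integrable (fun ω => ⨆ θ : Θ, |ρ (θ : EuclideanSpace ℝ (Fin d)) τ ω|) P)
    -- the sample criterion
    (Sn : ℕ → EuclideanSpace ℝ (Fin d) → 𝒢 → Ω → ℝ)
    (hSn : ∀ n θ τ ω, Sn n θ τ ω = (n : ℝ)⁻¹ * ∑ t ∈ Finset.range n, ρ θ τ (T^[t] ω))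
    -- the population criterion
    (S : EuclideanSpace ℝ (Fin d) → 𝒢 → ℝ)
    (hS : ∀ θ τ, S θ τ = ∫ ω, ρ θ τ ω ∂P)
    -- fix τ and assume S(·, τ) has a unique minimum on Θ at θstar
    (τ : 𝒢)
    (θstar : EuclideanSpace ℝ (Fin d))
    (hθstar_mem : θstar ∈ Θ)
    (hθstar_min : ∀ θ ∈ Θ, S θstar τ ≤ S θ τ)
    (hθstar_uniq : ∀ θ ∈ Θ, θ ≠ θstar → S θstar τ < S θ τ)
    -- the profile estimators
    (θtilde : ℕ → Ω → EuclideanSpace ℝ (Fin d))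
    (hθtilde_meas : ∀ n, Measurable (θtilde n))
    (hθtilde_min : ∀ n, ∀ᵐ ω ∂P, θtilde n ω ∈ Θ ∧
      ∀ θ ∈ Θ, Sn n (θtilde n ω) τ ω ≤ Sn n θ τ ω) :
    TendstoInMeasure P (fun n ω => Sn n (θtilde n ω) τ ω) atTop (fun _ => S θstar τ) := by
  rw [tendstoInMeasure_iff_norm]
  intro ε hε
  simp only [← dist_eq_norm]
  haveI : Nonempty ↥Θ := hΘne.to_subtype
  set G : Ω → ℝ := fun ω => ⨆ θ : Θ, |ρ (θ : EuclideanSpace ℝ (Fin d)) τ ω| with hG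
  have hGint : Integrable G P := hρint τ
  have hbound : ∀ θ ∈ Θ, ∀ ω, |ρ θ τ ω| ≤ G ω := by
    intro θ hθ ω
    have hb : BddAbove (Set.range fun θ' : ↥Θ => |ρ (θ' : EuclideanSpace ℝ (Fin d)) τ ω|) := by
      have h1 : ContinuousOn (fun θ' => |ρ θ' τ ω|) Θ := (hρcont τ ω).abs
      have h2 := (hΘcomp.image_of_continuousOn h1).bddAbove
      rwa [Set.image_eq_range] at h2
    exact le_ciSup hb ⟨θ, hθ⟩
  -- lower brackets
  have hbr : ∀ i : ↥Θ, ∃ δ > 0, ∃ g : Ω → ℝ, Measurable g ∧ Integrable g P ∧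
      (∀ θ ∈ Θ ∩ Metric.ball (i : EuclideanSpace ℝ (Fin d)) δ, ∀ ω, g ω ≤ ρ θ τ ω) ∧
      (∫ ω, ρ (i : EuclideanSpace ℝ (Fin d)) τ ω ∂P) - ε / 2 ≤ ∫ ω, g ω ∂P := fun i =>
    exists_lower_bracket Θ hΘcomp (fun θ ω => ρ θ τ ω) (fun ω => hρcont τ ω)
      (fun θ => hρmeas θ τ) G hGint hbound i.2 (by linarith)
  choose δ hδpos g hgmeas hgint hgle hgavg using hbr
  obtain ⟨t, ht⟩ := hΘcomp.elim_finite_subcover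
    (fun i : ↥Θ => Metric.ball (i : EuclideanSpace ℝ (Fin d)) (δ i))
    (fun i => Metric.isOpen_ball)
    (fun θ hθ => Set.mem_iUnion.2 ⟨⟨θ, hθ⟩, Metric.mem_ball_self (hδpos _)⟩)
  -- in-measure convergence of the averages
  have hconv : ∀ i : ↥Θ, Tendsto (fun n : ℕ => P {ω | ε / 2 ≤
      dist ((n : ℝ)⁻¹ * ∑ s ∈ Finset.range n, g i (T^[s] ω)) (∫ ω', g i ω' ∂P)})
      atTop (𝓝 0) :=
    fun i => tendstoInMeasure_iff_norm.mp (birkhoff_inMeasure hT (hgmeas i).aestronglyMeasurable (hgint i))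
      (ε / 2) (by linarith)
  have hρstar_int : Integrable (fun ω => ρ θstar τ ω) P := by
    refine Integrable.mono hGint (hρmeas θstar τ).aestronglyMeasurable ?_
    filter_upwards with ω
    rw [Real.norm_eq_abs, Real.norm_eq_abs]
    exact (hbound θstar hθstar_mem ω).trans (le_abs_self _)
  have hconvstar : Tendsto (fun n : ℕ => P {ω | ε / 2 ≤
      dist ((n : ℝ)⁻¹ * ∑ s ∈ Finset.range n, ρ θstar τ (T^[s] ω)) (S θstar τ)})
      atTop (𝓝 0) := by
    have h := tendstoInMeasure_iff_norm.mp (birkhoff_inMeasure hT (hρmeas θstar τ).aestronglyMeasurable hρstar_int)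
      (ε / 2) (by linarith)
    rw [hS θstar τ]
    exact h
  -- bad sets
  set A0 : ℕ → Set Ω := fun n => {ω | ¬ (θtilde n ω ∈ Θ ∧
      ∀ θ ∈ Θ, Sn n (θtilde n ω) τ ω ≤ Sn n θ τ ω)} with hA0def
  have hA0 : ∀ n, P (A0 n) = 0 := by
    intro n
    have := hθtilde_min n
    rwa [ae_iff] at this
  set Astar : ℕ → Set Ω := fun n => {ω | ε / 2 ≤
      dist ((n : ℝ)⁻¹ * ∑ s ∈ Finset.range n, ρ θstar τ (T^[s] ω)) (S θstar τ)} with hAstardef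
  set Ai : ℕ → ↥Θ → Set Ω := fun n i => {ω | ε / 2 ≤
      dist ((n : ℝ)⁻¹ * ∑ s ∈ Finset.range n, g i (T^[s] ω)) (∫ ω', g i ω' ∂P)} with hAidef
  -- the key inclusion
  have hincl : ∀ n, {ω | ε ≤ dist (Sn n (θtilde n ω) τ ω) (S θstar τ)} ⊆
      A0 n ∪ (Astar n ∪ ⋃ i ∈ t, Ai n i) := by
    intro n ω hω
    by_contra hnot
    simp only [Set.mem_union, Set.mem_iUnion, not_or, not_exists] at hnot
    obtain ⟨hn0, hnstar, hni⟩ := hnot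
    have hP1 : θtilde n ω ∈ Θ ∧ ∀ θ ∈ Θ, Sn n (θtilde n ω) τ ω ≤ Sn n θ τ ω := by
      by_contra hc; exact hn0 hc
    obtain ⟨hmem, hminθ⟩ := hP1
    obtain ⟨i, hit, hiball⟩ : ∃ i : ↥Θ, i ∈ t ∧
        θtilde n ω ∈ Metric.ball (i : EuclideanSpace ℝ (Fin d)) (δ i) := by
      have := ht hmem
      rw [Set.mem_iUnion] at this
      obtain ⟨i, hi⟩ := this
      rw [Set.mem_iUnion] at hi
      obtain ⟨hit, hi⟩ := hi
      exact ⟨i, hit, hi⟩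
    -- lower bound
    have hsum : ∑ s ∈ Finset.range n, g i (T^[s] ω)
        ≤ ∑ s ∈ Finset.range n, ρ (θtilde n ω) τ (T^[s] ω) :=
      Finset.sum_le_sum fun s _ => hgle i (θtilde n ω) ⟨hmem, hiball⟩ _
    have hmul : (n : ℝ)⁻¹ * ∑ s ∈ Finset.range n, g i (T^[s] ω)
        ≤ Sn n (θtilde n ω) τ ω := by
      rw [hSn]
      exact mul_le_mul_of_nonneg_left hsum (by positivity)
    have hdisti : dist ((n : ℝ)⁻¹ * ∑ s ∈ Finset.range n, g i (T^[s] ω))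
        (∫ ω', g i ω' ∂P) < ε / 2 := lt_of_not_ge (hni i hit)
    rw [Real.dist_eq, abs_lt] at hdisti
    have hci : S θstar τ - ε / 2 ≤ ∫ ω', g i ω' ∂P := by
      have h1 := hgavg i
      have h2 : S θstar τ ≤ S (i : EuclideanSpace ℝ (Fin d)) τ := hθstar_min _ i.2
      rw [hS (i : EuclideanSpace ℝ (Fin d)) τ] at h2
      linarith
    have hlower : S θstar τ - ε < Sn n (θtilde n ω) τ ω := by
      have := hdisti.1
      linarith
    -- upper bound
    have hdiststar : dist ((n : ℝ)⁻¹ * ∑ s ∈ Finset.range n, ρ θstar τ (T^[s] ω))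
        (S θstar τ) < ε / 2 := lt_of_not_ge hnstar
    rw [Real.dist_eq, abs_lt] at hdiststar
    have hupper : Sn n (θtilde n ω) τ ω < S θstar τ + ε := by
      have h1 := hminθ θstar hθstar_mem
      rw [hSn n θstar τ ω] at h1
      have := hdiststar.2
      linarith
    -- contradiction
    have : dist (Sn n (θtilde n ω) τ ω) (S θstar τ) < ε := by
      rw [Real.dist_eq, abs_lt]
      constructor <;> linarith
    exact absurd hω (not_le.mpr this)
  -- measure bound and conclusion
  have hmeasle : ∀ n, P {ω | ε ≤ dist (Sn n (θtilde n ω) τ ω) (S θstar τ)}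
      ≤ P (A0 n) + (P (Astar n) + ∑ i ∈ t, P (Ai n i)) := by
    intro n
    refine (measure_mono (hincl n)).trans ?_
    refine (measure_union_le _ _).trans ?_
    refine add_le_add_right ?_ _
    refine (measure_union_le _ _).trans ?_
    exact add_le_add_right (measure_biUnion_finset_le _ _) _
  have hsum0 : Tendsto (fun n => P (A0 n) + (P (Astar n) + ∑ i ∈ t, P (Ai n i)))
      atTop (𝓝 0) := by
    have h0 : Tendsto (fun n => P (A0 n)) atTop (𝓝 0) := by
      have heq0 : (fun n => P (A0 n)) = fun _ => 0 := funext hA0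
      rw [heq0]
      exact tendsto_const_nhds
    have hSsum : Tendsto (fun n => ∑ i ∈ t, P (Ai n i)) atTop (𝓝 0) := by
      have h := tendsto_finset_sum t (fun i _ => hconv i)
      simpa using h
    have := h0.add (hconvstar.add hSsum)
    simpa using this
  exact tendsto_of_tendsto_of_tendsto_of_le_of_le tendsto_const_nhds hsum0
    (fun n => zero_le) hmeasle
end
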